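/- arXiv:2505.04563 — 5 statements merged into one kernel-verified Lean document; each statement's English description precedes it below -/
import Mathlib

section
/- Let K be a field, k ≥ 2, w ≥ 1, n = w + k + 1, and let (a_{s,i}) ∈ K^{(k-1)×n}. Then there exists a tame SL_k-frieze pattern of width w over K whose entries satisfy the recursion with coefficients (a_{s,i}) if and only if A_1 A_2 ⋯ A_n = (-1)^{k-1} I_k, where A_i are the companion-type matrices built from (a_{s,i}). -/
open scoped Classical

noncomputable section

namespace FriezeCount

variable (K : Type) [Field K]

/-- A tame `SL_k`-frieze pattern of width `w` over `K`, encoded as a family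
`e : ℤ → ℤ → K`, `(j, i) ↦ e_j(i)`, normalized to vanish for `j` outside
`{-(k-1), ..., n-1}` (where `n = w + k + 1`, so `n - 1 = w + k`):
the `k-1` bottom and top rows vanish, the rows `j = 0` and `j = w+1` consist of ones,
all `k × k` diamonds have determinant `1` and all `(k+1) × (k+1)` diamonds have
determinant `0` (whenever all the entries involved are defined). -/
def IsTameFrieze (k w : ℕ) (e : ℤ → ℤ → K) : Prop :=
  (∀ j i : ℤ, j ≤ -1 → e j i = 0) ∧
  (∀ j i : ℤ, (w : ℤ) + 2 ≤ j → e j i = 0) ∧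
  (∀ i : ℤ, e 0 i = 1) ∧
  (∀ i : ℤ, e ((w : ℤ) + 1) i = 1) ∧
  (∀ i j : ℤ, -((k : ℤ) - 1) ≤ j - ((k : ℤ) - 1) → j + ((k : ℤ) - 1) ≤ (w : ℤ) + (k : ℤ) →
    (Matrix.of fun r c : Fin k =>
      e (j + ((c : ℕ) : ℤ) - ((r : ℕ) : ℤ)) (i + ((r : ℕ) : ℤ))).det = 1) ∧
  (∀ i j : ℤ, -((k : ℤ) - 1) ≤ j - (k : ℤ) → j + (k : ℤ) ≤ (w : ℤ) + (k : ℤ) →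
    (Matrix.of fun r c : Fin (k + 1) =>
      e (j + ((c : ℕ) : ℤ) - ((r : ℕ) : ℤ)) (i + ((r : ℕ) : ℤ))).det = 0)

/-- The set `C_k(n)` of cyclic `n`-tuples of points in `ℙ^{k-1}(K)` such that any `k`
cyclically consecutive points are projectively independent. -/
def Ccal (k n : ℕ) : Set (ZMod n → Projectivization K (Fin k → K)) :=
  {v | ∀ i : ZMod n,
    Projectivization.Independent fun t : Fin k => v (i + ((t : ℕ) : ZMod n))}

/-- `V` is a lift of the tuple `v` of projective points. -/
def IsLift (k n : ℕ) (v : ZMod n → Projectivization K (Fin k → K))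
    (V : ZMod n → Fin k → K) : Prop :=
  ∀ i, ∃ h : V i ≠ 0, Projectivization.mk K (V i) h = v i

/-- `d_i = det(V_i, ..., V_{i+k-1})`, indices mod `n`. -/
def cycDet (k n : ℕ) (V : ZMod n → Fin k → K) (i : ZMod n) : K :=
  (Matrix.of fun r c : Fin k => V (i + ((r : ℕ) : ZMod n)) c).det

/-- The set `C_k^*(n)`: tuples of `C_k(n)` satisfying, for any lift and for each
`i ∈ {1, ..., g-1}` (`g = gcd(k,n)`), the relation
`d_i d_{i+g} ⋯ d_{i+n-g} = d_{i+1} d_{i+g+1} ⋯ d_{i+n-g+1}`.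
(When `g = 1` the condition is vacuous and this set is `C_k(n)`.) -/
def CstarSet (k n : ℕ) : Set (ZMod n → Projectivization K (Fin k → K)) :=
  {v | v ∈ Ccal K k n ∧ ∀ V : ZMod n → Fin k → K, IsLift K k n v V →
    ∀ i ∈ Finset.Icc 1 (Nat.gcd k n - 1),
      (∏ s ∈ Finset.range (n / Nat.gcd k n),
        cycDet K k n V (((i + s * Nat.gcd k n : ℕ)) : ZMod n)) =
      ∏ s ∈ Finset.range (n / Nat.gcd k n),
        cycDet K k n V (((i + 1 + s * Nat.gcd k n : ℕ)) : ZMod n)}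

/-- The (anti-periodically) extended lift: `Ṽ_m = V_m` for `1 ≤ m ≤ n` and
`Ṽ_{n+i} = (-1)^{k-1} V_i` for `1 ≤ i ≤ k - 1`. -/
def signedExt (k n : ℕ) (V : ZMod n → Fin k → K) (m : ℕ) : Fin k → K :=
  if m ≤ n then V ((m : ℕ) : ZMod n) else ((-1 : K) ^ (k - 1)) • V ((m : ℕ) : ZMod n)

/-- The lift `V` has constant consecutive determinants:
`det(Ṽ_i, ..., Ṽ_{i+k-1})` is the same for all `i = 1, ..., n`. -/
def HasConstConsecDets (k n : ℕ) (V : ZMod n → Fin k → K) : Prop :=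
  ∀ i ∈ Finset.Icc 1 n, ∀ i' ∈ Finset.Icc 1 n,
    (Matrix.of fun (r : Fin k) (c : Fin k) => signedExt K k n V (i + (r : ℕ)) c).det =
    (Matrix.of fun (r : Fin k) (c : Fin k) => signedExt K k n V (i' + (r : ℕ)) c).det

/-- The coefficient relation (basis expansion along the tuple):
`Ṽ_i = Σ_{j=1}^{k-1} (-1)^{j-1} a_{k-j, i+j-1} Ṽ_{i+j} + (-1)^{k-1} Ṽ_{i+k}` for `i ∈ [n]`,
where `Ṽ` is the signed extension of the lift `V` and `a_s` corresponds to `a ⟨s-1⟩`. -/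
def CoeffRel (k n : ℕ) (V : ZMod n → Fin k → K)
    (a : Fin (k - 1) → ZMod n → K) : Prop :=
  ∀ i ∈ Finset.Icc 1 n,
    signedExt K k n V i =
      (∑ t : Fin (k - 1),
        ((-1 : K) ^ (t : ℕ) * a ⟨k - 2 - (t : ℕ), by have := t.isLt; omega⟩
            (((i + (t : ℕ) : ℕ)) : ZMod n)) • signedExt K k n V (i + (t : ℕ) + 1))
      + ((-1 : K) ^ (k - 1)) • signedExt K k n V (i + k)

/-- The set `Coeff(v)` of coefficient matrices arising from lifts of `v` with
constant consecutive determinants. -/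
def CoeffSet (k n : ℕ) (v : ZMod n → Projectivization K (Fin k → K)) :
    Set (Fin (k - 1) → ZMod n → K) :=
  {a | ∃ V : ZMod n → Fin k → K,
    IsLift K k n v V ∧ HasConstConsecDets K k n V ∧ CoeffRel K k n V a}

/-- Companion-type matrix `A_i` built from the coefficients `(a_{s,i})`: first row
`(a_{k-1,i}, -a_{k-2,i+1}, ..., (-1)^{k-2} a_{1,i+k-2}, (-1)^{k-1})`, ones on the
subdiagonal, zeros elsewhere (`a_s` corresponds to `a ⟨s-1⟩`). -/
def companion (k n : ℕ) (a : Fin (k - 1) → ZMod n → K) (i : ZMod n) :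
    Matrix (Fin k) (Fin k) K :=
  Matrix.of fun r c =>
    if (r : ℕ) = 0 then
      if h : (c : ℕ) < k - 1 then
        (-1 : K) ^ (c : ℕ) * a ⟨k - 2 - (c : ℕ), by omega⟩ (i + ((c : ℕ) : ZMod n))
      else (-1 : K) ^ (k - 1)
    else if (r : ℕ) = (c : ℕ) + 1 then 1 else 0

/-- The ordered product `A_1 A_2 ⋯ A_n`. -/
def friezeProd (k n : ℕ) (a : Fin (k - 1) → ZMod n → K) : Matrix (Fin k) (Fin k) K :=
  ((List.range n).map fun i => companion K k n a (((i + 1 : ℕ)) : ZMod n)).prod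

/-- The entries `e` satisfy the recursion with coefficients `(a_{s,i})`:
`e_j(i) = Σ_{t=0}^{k-2} (-1)^t a_{k-1-t, i+t} e_{j-t-1}(i+t+1) + (-1)^{k-1} e_{j-k}(i+k)`
for all `i ∈ ℤ` and all `j` with `0 ≤ j ≤ n-1` for which all the entries involved are
defined (i.e. `1 ≤ j ≤ n-1`); `a_s` corresponds to `a ⟨s-1⟩`, second index mod `n`. -/
def SatisfiesRecursion (k n : ℕ) (e : ℤ → ℤ → K)
    (a : Fin (k - 1) → ZMod n → K) : Prop :=
  ∀ i j : ℤ, 1 ≤ j → j ≤ (n : ℤ) - 1 →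
    e j i =
      (∑ t : Fin (k - 1),
        (-1 : K) ^ (t : ℕ) * a ⟨k - 2 - (t : ℕ), by have := t.isLt; omega⟩
            ((i + (t : ℕ) : ℤ) : ZMod n) * e (j - (t : ℕ) - 1) (i + (t : ℕ) + 1))
      + (-1 : K) ^ (k - 1) * e (j - (k : ℕ)) (i + (k : ℕ))

/-- The projective general linear group `PGL(k, K) = GL(k, K) / center`. -/
def PGL (k : ℕ) : Type _ :=
  GL (Fin k) K ⧸ Subgroup.center (GL (Fin k) K)

instance (k : ℕ) : Group (PGL K k) :=
  inferInstanceAs (Group (GL (Fin k) K ⧸ Subgroup.center (GL (Fin k) K)))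

/-- The action of `A ∈ GL(k, K)` on the projective space `ℙ^{k-1}(K)`. -/
def glProj (k : ℕ) (A : GL (Fin k) K) :
    Projectivization K (Fin k → K) → Projectivization K (Fin k → K) :=
  Projectivization.map
    ((LinearMap.GeneralLinearGroup.generalLinearEquiv K (Fin k → K)
        (Matrix.GeneralLinearGroup.toLin A)) : (Fin k → K) →ₗ[K] (Fin k → K))
    (LinearMap.GeneralLinearGroup.generalLinearEquiv K (Fin k → K)
        (Matrix.GeneralLinearGroup.toLin A)).injective

/-- The stabilizer of a tuple `v` of projective points under the (diagonal) action
of `PGL(k, K)`; since the center of `GL(k, K)` acts trivially on projective space,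
this is the set of classes of matrices `A ∈ GL(k, K)` fixing each `v_i`. -/
def pglStab (k n : ℕ) (v : ZMod n → Projectivization K (Fin k → K)) :
    Set (PGL K k) :=
  {g | ∃ A : GL (Fin k) K, (QuotientGroup.mk A : PGL K k) = g ∧
        ∀ i, glProj K k A (v i) = v i}

/-- `(U_1, ..., U_r)` is a decomposition with respect to the lift `V`:
the `U_j` are nonzero, `K^k = U_1 ⊕ ⋯ ⊕ U_r`, and every `V_i` lies in some `U_j`. -/
def IsDecompOfLift (k n : ℕ) (V : ZMod n → Fin k → K) {r : ℕ}
    (U : Fin r → Submodule K (Fin k → K)) : Prop :=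
  (∀ j, U j ≠ ⊥) ∧ iSupIndep U ∧ (⨆ j, U j) = ⊤ ∧ ∀ i, ∃ j, V i ∈ U j

/-- `(U_1, ..., U_r)` is a decomposition of the tuple `v` of projective points
(this does not depend on the choice of the lift). -/
def IsDecompOf (k n : ℕ) (v : ZMod n → Projectivization K (Fin k → K)) {r : ℕ}
    (U : Fin r → Submodule K (Fin k → K)) : Prop :=
  ∀ V : ZMod n → Fin k → K, IsLift K k n v V → IsDecompOfLift K k n V U

/-- A decomposition is maximal if no member `U_j` can be split as a direct sum
`U_j = W₁ ⊕ W₂` of nonzero subspaces in such a way that replacing `U_j` by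
`W₁, W₂` again yields a decomposition of `v`. -/
def IsMaxDecompOf (k n : ℕ) (v : ZMod n → Projectivization K (Fin k → K)) {r : ℕ}
    (U : Fin r → Submodule K (Fin k → K)) : Prop :=
  IsDecompOf K k n v U ∧
    ∀ (j : Fin r) (W₁ W₂ : Submodule K (Fin k → K)), W₁ ≠ ⊥ → W₂ ≠ ⊥ →
      Disjoint W₁ W₂ → W₁ ⊔ W₂ = U j →
      ¬ ∀ (V : ZMod n → Fin k → K), IsLift K k n v V →
        ∀ i, (∃ l, l ≠ j ∧ V i ∈ U l) ∨ V i ∈ W₁ ∨ V i ∈ W₂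

/-- The triple `{v_i, v_{i+1}, v_{i+2}}` (indices mod `n`) is projectively independent. -/
def tripleIndep (n : ℕ) (v : ZMod n → Projectivization K (Fin 3 → K)) (i : ℕ) : Prop :=
  Projectivization.Independent fun t : Fin 3 => v (((i + (t : ℕ) : ℕ)) : ZMod n)

/-- The set `C_3^{s₁ s₂}(n)`; `s₁ s₂ : Bool`, with `true` standing for `+`:
tuples with `v_n ≠ v_1` such that the triple at `i` is independent exactly for
`i ∈ I_{s₁,s₂} = {1,...,n-2} ∪ {n-1 if s₁ = +} ∪ {n if s₂ = +}`. -/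
def C3s (n : ℕ) (s₁ s₂ : Bool) : Set (ZMod n → Projectivization K (Fin 3 → K)) :=
  {v | v ((n : ℕ) : ZMod n) ≠ v ((1 : ℕ) : ZMod n) ∧
    (∀ i : ℕ, 1 ≤ i → i ≤ n - 2 → tripleIndep K n v i) ∧
    (tripleIndep K n v (n - 1) ↔ s₁ = true) ∧
    (tripleIndep K n v n ↔ s₂ = true)}

section Aux
variable {K : Type} [Field K]

/-- Diagonal vector `(e_{j-r}(i+r))_r`. -/
def vv (m : ℕ) (e : ℤ → ℤ → K) (i j : ℤ) : Fin (m + 2) → K :=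
  fun r => e (j - ((r : ℕ) : ℤ)) (i + ((r : ℕ) : ℤ))

def Amat (m n : ℕ) (a : Fin (m + 1) → ZMod n → K) (i : ℤ) :
    Matrix (Fin (m + 2)) (Fin (m + 2)) K :=
  companion K (m + 2) n a ((i : ℤ) : ZMod n)

def PMp (m n : ℕ) (a : Fin (m + 1) → ZMod n → K) (i : ℤ) (len : ℕ) :
    Matrix (Fin (m + 2)) (Fin (m + 2)) K :=
  ((List.range len).map fun s => Amat m n a (i + (s : ℕ))).prod

lemma companion_apply_zero_castSucc (m n : ℕ) (a : Fin (m + 1) → ZMod n → K) (ι : ZMod n)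
    (t : Fin (m + 1)) :
    companion K (m + 2) n a ι 0 t.castSucc
      = (-1 : K) ^ (t : ℕ) * a ⟨m - (t : ℕ), by omega⟩ (ι + ((t : ℕ) : ZMod n)) := by
  have hlt : ((t.castSucc : Fin (m + 2)) : ℕ) < m + 2 - 1 := by simpa using t.isLt
  simp only [companion, Matrix.of_apply, Fin.val_zero, eq_self_iff_true, if_true]
  rw [dif_pos hlt]
  rfl

lemma companion_apply_zero_last (m n : ℕ) (a : Fin (m + 1) → ZMod n → K) (ι : ZMod n) :
    companion K (m + 2) n a ι 0 (Fin.last (m + 1)) = (-1 : K) ^ (m + 1) := by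
  simp only [companion, Matrix.of_apply, Fin.val_zero, eq_self_iff_true, if_true]
  rw [dif_neg (by simp)]
  rfl

lemma companion_apply_succ (m n : ℕ) (a : Fin (m + 1) → ZMod n → K) (ι : ZMod n)
    (t : Fin (m + 1)) (c : Fin (m + 2)) :
    companion K (m + 2) n a ι t.succ c = if (c : ℕ) = (t : ℕ) then 1 else 0 := by
  simp only [companion, Matrix.of_apply, Fin.val_succ]
  rw [if_neg (by omega)]
  by_cases h : (c : ℕ) = (t : ℕ)
  · rw [if_pos (by omega), if_pos h]
  · rw [if_neg (by omega), if_neg h]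

lemma companion_mulVec (m n : ℕ) (a : Fin (m + 1) → ZMod n → K) (ι : ZMod n)
    (x : Fin (m + 2) → K) :
    (companion K (m + 2) n a ι).mulVec x =
    Fin.cons
      ((∑ t : Fin (m + 1),
          ((-1 : K) ^ (t : ℕ) * a ⟨m - (t : ℕ), by omega⟩ (ι + ((t : ℕ) : ZMod n)))
            * x t.castSucc)
        + (-1 : K) ^ (m + 1) * x (Fin.last (m + 1)))
      (fun t => x t.castSucc) := by
  funext r
  induction r using Fin.cases with
  | zero =>
    rw [Fin.cons_zero]
    show ∑ c, companion K (m + 2) n a ι 0 c * x c = _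
    rw [Fin.sum_univ_castSucc]
    congr 1
    · exact Finset.sum_congr rfl fun t _ => by rw [companion_apply_zero_castSucc]
    · rw [companion_apply_zero_last]
  | succ t =>
    rw [Fin.cons_succ]
    show ∑ c, companion K (m + 2) n a ι t.succ c * x c = _
    rw [Finset.sum_eq_single t.castSucc]
    · rw [companion_apply_succ, if_pos (by simp), one_mul]
    · intro c _ hc
      rw [companion_apply_succ, if_neg, zero_mul]
      intro h
      exact hc (Fin.ext (by simpa using h))
    · intro h; exact absurd (Finset.mem_univ _) h

end Aux
section Aux2
variable {K : Type} [Field K]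

lemma companion_det (m n : ℕ) (a : Fin (m + 1) → ZMod n → K) (ι : ZMod n) :
    (companion K (m + 2) n a ι).det = 1 := by
  set A := companion K (m + 2) n a ι with hA
  have hrot : ∀ t : Fin (m + 1), finRotate (m + 2) t.castSucc = t.succ := by
    intro t
    rw [finRotate_succ_apply]
    apply Fin.ext
    rw [Fin.val_add_one_of_lt (by exact Fin.castSucc_lt_last t), Fin.val_succ]
    rfl
  have hB : ((A.submatrix (finRotate (m + 2)) id).det) = (-1 : K) ^ (m + 1) := by
    rw [Matrix.det_of_lowerTriangular]
    · rw [Fin.prod_univ_castSucc]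
      have h1 : ∀ t : Fin (m + 1),
          A.submatrix (finRotate (m + 2)) id t.castSucc t.castSucc = 1 := by
        intro t
        rw [Matrix.submatrix_apply, id, hrot, hA, companion_apply_succ, if_pos (Fin.coe_castSucc t)]
      have h2 : A.submatrix (finRotate (m + 2)) id (Fin.last (m + 1)) (Fin.last (m + 1))
          = (-1 : K) ^ (m + 1) := by
        rw [Matrix.submatrix_apply, id, finRotate_succ_apply, Fin.last_add_one, hA,
          companion_apply_zero_last]
      rw [h2, Finset.prod_congr rfl fun t _ => h1 t]
      simp
    · intro i j hij
      induction i using Fin.lastCases with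
      | last => exact absurd (Fin.le_last j) (not_le.2 hij)
      | cast t =>
        rw [Matrix.submatrix_apply, id, hrot, hA, companion_apply_succ, if_neg]
        intro h
        have hlt : (t.castSucc : Fin (m + 2)) < j := hij
        rw [Fin.lt_def, Fin.coe_castSucc] at hlt
        omega
  rw [Matrix.det_permute, sign_finRotate] at hB
  have hcast : ((((-1 : ℤˣ) ^ (m + 1) : ℤˣ) : ℤ) : K) = (-1 : K) ^ (m + 1) := by
    push_cast
    rfl
  rw [show m + 2 - 1 = m + 1 by omega, hcast] at hB
  have hne : ((-1 : K) ^ (m + 1)) ≠ 0 := by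
    apply pow_ne_zero; exact neg_ne_zero.2 one_ne_zero
  field_simp at hB
  exact hB
end Aux2
section Aux3
variable {K : Type} [Field K]

lemma e_congr (e : ℤ → ℤ → K) {j1 j2 i1 i2 : ℤ} (hj : j1 = j2) (hi : i1 = i2) :
    e j1 i1 = e j2 i2 := by rw [hj, hi]

lemma PMp_zero (m n : ℕ) (a : Fin (m + 1) → ZMod n → K) (i : ℤ) : PMp m n a i 0 = 1 := by
  simp [PMp]

lemma PMp_succ_left (m n : ℕ) (a : Fin (m + 1) → ZMod n → K) (i : ℤ) (len : ℕ) :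
    PMp m n a i (len + 1) = Amat m n a i * PMp m n a (i + 1) len := by
  rw [PMp, List.range_succ_eq_map, List.map_cons, List.prod_cons, List.map_map]
  have h0 : i + ((0 : ℕ) : ℤ) = i := by norm_num
  rw [h0]
  congr 1
  rw [PMp]
  have hfun : ((fun s : ℕ => Amat m n a (i + (s : ℕ))) ∘ Nat.succ)
      = (fun s : ℕ => Amat m n a (i + 1 + (s : ℕ))) := by
    funext s
    simp only [Function.comp]
    congr 1
    push_cast
    ring
  rw [hfun]

lemma PMp_add (m n : ℕ) (a : Fin (m + 1) → ZMod n → K) (i : ℤ) (s t : ℕ) :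
    PMp m n a i (s + t) = PMp m n a i s * PMp m n a (i + (s : ℕ)) t := by
  rw [PMp, List.range_add, List.map_append, List.prod_append]
  congr 1
  rw [PMp, List.map_map]
  have hfun : ((fun u : ℕ => Amat m n a (i + (u : ℕ))) ∘ fun x => s + x)
      = (fun u : ℕ => Amat m n a (i + (s : ℕ) + (u : ℕ))) := by
    funext u
    simp only [Function.comp]
    congr 1
    push_cast
    ring
  rw [hfun]

lemma vv_zero (m : ℕ) (e : ℤ → ℤ → K) (hlow : ∀ j i : ℤ, j ≤ -1 → e j i = 0)
    (hzero : ∀ i : ℤ, e 0 i = 1) (i : ℤ) :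
    vv m e i 0 = Fin.cons 1 (fun _ => 0) := by
  funext r
  induction r using Fin.cases with
  | zero => simpa [vv] using hzero i
  | succ t =>
    rw [Fin.cons_succ]
    apply hlow
    have : ((t.succ : Fin (m + 2)) : ℕ) = (t : ℕ) + 1 := Fin.val_succ t
    rw [this]
    push_cast
    omega

lemma vv_last (m w n : ℕ) (hn : n = w + m + 3) (e : ℤ → ℤ → K)
    (htop0 : ∀ j i : ℤ, (w : ℤ) + 2 ≤ j → e j i = 0)
    (htop1 : ∀ i : ℤ, e ((w : ℤ) + 1) i = 1) (i : ℤ) :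
    vv m e i ((n : ℤ) - 1) = Fin.snoc (fun _ => 0) 1 := by
  funext r
  induction r using Fin.lastCases with
  | last =>
    rw [Fin.snoc_last]
    have hv : ((Fin.last (m + 1) : Fin (m + 2)) : ℕ) = m + 1 := rfl
    show e ((n : ℤ) - 1 - ((m + 1 : ℕ) : ℤ)) (i + ((m + 1 : ℕ) : ℤ)) = 1
    have : (n : ℤ) - 1 - ((m + 1 : ℕ) : ℤ) = (w : ℤ) + 1 := by
      subst hn; push_cast; ring
    rw [this]
    exact htop1 _
  | cast t =>
    rw [Fin.snoc_castSucc]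
    apply htop0
    have hv : ((t.castSucc : Fin (m + 2)) : ℕ) = (t : ℕ) := rfl
    rw [hv]
    have : (t : ℕ) ≤ m := by omega
    subst hn
    push_cast
    omega

lemma vv_step (m n : ℕ) (a : Fin (m + 1) → ZMod n → K) (e : ℤ → ℤ → K)
    (hrec : SatisfiesRecursion K (m + 2) n e a) (i j : ℤ)
    (h0 : 0 ≤ j) (h1 : j + 1 ≤ (n : ℤ) - 1) :
    vv m e i (j + 1) = (Amat m n a i).mulVec (vv m e (i + 1) j) := by
  rw [Amat, companion_mulVec]
  funext r
  induction r using Fin.cases with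
  | zero =>
    rw [Fin.cons_zero]
    have h : e (j + 1) i =
        (∑ t : Fin (m + 1),
          (-1 : K) ^ (t : ℕ) * a ⟨m - (t : ℕ), by omega⟩ ((i + (t : ℕ) : ℤ) : ZMod n)
            * e (j + 1 - (t : ℕ) - 1) (i + (t : ℕ) + 1))
        + (-1 : K) ^ (m + 1) * e (j + 1 - ((m + 2 : ℕ) : ℤ)) (i + ((m + 2 : ℕ) : ℤ)) :=
      hrec i (j + 1) (by omega) h1
    have h2 : vv m e i (j + 1) 0 = e (j + 1) i := by simp [vv]
    rw [h2, h]
    congr 1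
    · refine Finset.sum_congr rfl fun t _ => ?_
      rw [mul_assoc, mul_assoc]
      congr 1
      congr 1
      · congr 1
        push_cast
        ring
      · simp only [vv, Fin.coe_castSucc]
        exact e_congr e (by push_cast; ring) (by push_cast; ring)
    · congr 1
      simp only [vv, Fin.val_last]
      exact e_congr e (by push_cast; ring) (by push_cast; ring)
  | succ t =>
    rw [Fin.cons_succ]
    simp only [vv, Fin.val_succ, Fin.coe_castSucc]
    exact e_congr e (by push_cast; ring) (by push_cast; ring)

end Aux3
section Aux4
variable {K : Type} [Field K]

lemma vv_chain (m n : ℕ) (a : Fin (m + 1) → ZMod n → K) (e : ℤ → ℤ → K)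
    (hrec : SatisfiesRecursion K (m + 2) n e a) :
    ∀ (len : ℕ) (i j : ℤ), 0 ≤ j → j + (len : ℤ) ≤ (n : ℤ) - 1 →
      (PMp m n a i len).mulVec (vv m e (i + (len : ℤ)) j) = vv m e i (j + (len : ℤ)) := by
  intro len
  induction len with
  | zero =>
    intro i j h0 h1
    simp only [Nat.cast_zero, add_zero]
    rw [PMp_zero, Matrix.one_mulVec]
  | succ len ih =>
    intro i j h0 h1
    rw [PMp_succ_left, ← Matrix.mulVec_mulVec]
    have hi : i + ((len + 1 : ℕ) : ℤ) = (i + 1) + (len : ℤ) := by push_cast; ring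
    rw [hi, ih (i + 1) j h0 (by push_cast at h1 ⊢; omega)]
    have hj : j + ((len + 1 : ℕ) : ℤ) = (j + (len : ℤ)) + 1 := by push_cast; ring
    rw [hj, vv_step m n a e hrec i (j + (len : ℤ)) (by omega) (by push_cast at h1 ⊢; omega)]

lemma Amat_mulVec_snoc (m n : ℕ) (a : Fin (m + 1) → ZMod n → K) (i : ℤ) :
    (Amat m n a i).mulVec ((Fin.snoc (fun _ => (0 : K)) (1 : K)) : Fin (m + 2) → K)
      = ((-1 : K) ^ (m + 1)) • ((Fin.cons (1 : K) fun _ => (0 : K)) : Fin (m + 2) → K) := by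
  rw [Amat, companion_mulVec]
  funext r
  induction r using Fin.cases with
  | zero =>
    rw [Fin.cons_zero]
    simp [Fin.snoc_castSucc, Fin.snoc_last]
  | succ t =>
    rw [Fin.cons_succ]
    simp [Fin.snoc_castSucc]

lemma Amat_mulVec_scaled_snoc (m n : ℕ) (a : Fin (m + 1) → ZMod n → K) (i : ℤ) :
    (Amat m n a i).mulVec (((-1 : K) ^ (m + 1)) • ((Fin.snoc (fun _ => (0 : K)) (1 : K)) : Fin (m + 2) → K))
      = ((Fin.cons (1 : K) fun _ => (0 : K)) : Fin (m + 2) → K) := by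
  rw [Matrix.mulVec_smul, Amat_mulVec_snoc, smul_smul, ← pow_add]
  have : ((-1 : K) ^ (m + 1 + (m + 1))) = 1 := by
    rw [show m + 1 + (m + 1) = 2 * (m + 1) by ring, pow_mul]
    norm_num
  rw [this, one_smul]

/-- The `0`-th diamond matrix is upper triangular with unit diagonal. -/
lemma det_diamond_zero (m : ℕ) (e : ℤ → ℤ → K) (hlow : ∀ j i : ℤ, j ≤ -1 → e j i = 0)
    (hzero : ∀ i : ℤ, e 0 i = 1) (i : ℤ) :
    (Matrix.of fun r c : Fin (m + 2) => vv m e i ((c : ℕ) : ℤ) r).det = 1 := by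
  rw [Matrix.det_of_upperTriangular]
  · rw [Finset.prod_congr rfl fun r _ => show (Matrix.of fun r c : Fin (m+2) =>
        vv m e i ((c : ℕ) : ℤ) r) r r = 1 by
      simp only [Matrix.of_apply, vv]
      rw [show ((r : ℕ) : ℤ) - ((r : ℕ) : ℤ) = 0 by ring]
      exact hzero _]
    simp
  · intro r c hrc
    simp only [Matrix.of_apply, vv]
    apply hlow
    have : (c : ℕ) < (r : ℕ) := hrc
    omega

end Aux4
section Aux5
variable {K : Type} [Field K]

lemma eper (m w n : ℕ) (hn : n = w + m + 3) (a : Fin (m + 1) → ZMod n → K)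
    (e : ℤ → ℤ → K)
    (hlow : ∀ j i : ℤ, j ≤ -1 → e j i = 0)
    (htop0 : ∀ j i : ℤ, (w : ℤ) + 2 ≤ j → e j i = 0)
    (hzero : ∀ i : ℤ, e 0 i = 1)
    (hrec : SatisfiesRecursion K (m + 2) n e a) :
    ∀ (jj : ℕ) (j : ℤ), j ≤ (jj : ℤ) → ∀ i : ℤ, e j (i + (n : ℤ)) = e j i := by
  intro jj
  induction jj with
  | zero =>
    intro j hj i
    norm_num at hj
    rcases lt_or_eq_of_le hj with h | h
    · rw [hlow j _ (by omega), hlow j _ (by omega)]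
    · rw [h, hzero, hzero]
  | succ jj ih =>
    intro j hj i
    by_cases hj2 : j ≤ (jj : ℤ)
    · exact ih j hj2 i
    have hj3 : j = (jj : ℤ) + 1 := by push_cast at hj ⊢; omega
    by_cases htop : (w : ℤ) + 2 ≤ j
    · rw [htop0 j _ htop, htop0 j _ htop]
    have h1 : 1 ≤ j := by omega
    have hnz : (n : ℤ) = (w : ℤ) + (m : ℤ) + 3 := by rw [hn]; push_cast; ring
    have h2 : j ≤ (n : ℤ) - 1 := by omega
    have hR : ∀ i' : ℤ, e j i' =
        (∑ t : Fin (m + 1),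
          (-1 : K) ^ (t : ℕ) * a ⟨m - (t : ℕ), by omega⟩ ((i' + (t : ℕ) : ℤ) : ZMod n)
            * e (j - (t : ℕ) - 1) (i' + (t : ℕ) + 1))
        + (-1 : K) ^ (m + 1) * e (j - ((m + 2 : ℕ) : ℤ)) (i' + ((m + 2 : ℕ) : ℤ)) :=
      fun i' => hrec i' j h1 h2
    rw [hR i, hR (i + (n : ℤ))]
    congr 1
    · refine Finset.sum_congr rfl fun t _ => ?_
      have ht : (0 : ℤ) ≤ ((t : ℕ) : ℤ) := Int.natCast_nonneg _
      have hc : (((i + (n : ℤ)) + ((t : ℕ) : ℤ) : ℤ) : ZMod n)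
          = ((i + ((t : ℕ) : ℤ) : ℤ) : ZMod n) := by
        push_cast
        rw [ZMod.natCast_self]
        ring
      rw [hc, show i + (n : ℤ) + ((t : ℕ) : ℤ) + 1 = (i + ((t : ℕ) : ℤ) + 1) + (n : ℤ) by ring,
        ih (j - ((t : ℕ) : ℤ) - 1) (by omega) (i + ((t : ℕ) : ℤ) + 1)]
    · rw [show i + (n : ℤ) + ((m + 2 : ℕ) : ℤ) = (i + ((m + 2 : ℕ) : ℤ)) + (n : ℤ) by ring,
        ih (j - ((m + 2 : ℕ) : ℤ)) (by push_cast; omega) (i + ((m + 2 : ℕ) : ℤ))]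

lemma friezeProd_eq_PMp (m n : ℕ) (a : Fin (m + 1) → ZMod n → K) :
    friezeProd K (m + 2) n a = PMp m n a 1 n := by
  rw [friezeProd, PMp]
  congr 1
  have hfun : (fun i : ℕ => companion K (m + 2) n a (((i + 1 : ℕ)) : ZMod n))
      = (fun s : ℕ => Amat m n a (1 + (s : ℕ))) := by
    funext s
    rw [Amat]
    congr 1
    push_cast
    ring
  rw [hfun]

lemma forward (m w n : ℕ) (hn : n = w + m + 3)
    (a : Fin (m + 1) → ZMod n → K) (e : ℤ → ℤ → K)
    (hf : IsTameFrieze K (m + 2) w e) (hrec : SatisfiesRecursion K (m + 2) n e a) :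
    friezeProd K (m + 2) n a
      = ((-1 : K) ^ (m + 1)) • (1 : Matrix (Fin (m + 2)) (Fin (m + 2)) K) := by
  obtain ⟨hlow, htop0, hzero, htop1, hdet, hdet1⟩ := hf
  have hper : ∀ (j i : ℤ), e j (i + (n : ℤ)) = e j i := by
    intro j i
    exact eper m w n hn a e hlow htop0 hzero hrec j.toNat j (Int.self_le_toNat j) i
  have hnlarge : m + 3 ≤ n := by omega
  -- Step A : column action of the full product
  have stepA : ∀ c : Fin (m + 2), (PMp m n a 1 n).mulVec (vv m e 1 ((c : ℕ) : ℤ))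
      = ((-1 : K) ^ (m + 1)) • vv m e 1 ((c : ℕ) : ℤ) := by
    intro c
    have hc : (c : ℕ) ≤ m + 1 := by have := c.isLt; omega
    obtain ⟨d, hd⟩ : ∃ d, n = (c : ℕ) + 1 + d := ⟨n - (c : ℕ) - 1, by omega⟩
    have hvshift : vv m e 1 ((c : ℕ) : ℤ) = vv m e (1 + (n : ℤ)) ((c : ℕ) : ℤ) := by
      funext r
      simp only [vv]
      rw [show 1 + (n : ℤ) + ((r : ℕ) : ℤ) = (1 + ((r : ℕ) : ℤ)) + (n : ℤ) by ring, hper]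
    conv_lhs => rw [hvshift]
    have hsplit : PMp m n a 1 n
        = PMp m n a 1 (c : ℕ) * (Amat m n a (1 + ((c : ℕ) : ℤ)) * PMp m n a (1 + ((c : ℕ) : ℤ) + 1) d) := by
      have h0 : PMp m n a 1 n = PMp m n a 1 ((c : ℕ) + (1 + d)) :=
        congrArg (PMp m n a 1) (by omega)
      rw [h0, PMp_add]
      congr 1
      have h1 : PMp m n a (1 + ((c : ℕ) : ℤ)) (1 + d)
          = PMp m n a (1 + ((c : ℕ) : ℤ)) (d + 1) :=
        congrArg (PMp m n a _) (by omega)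
      rw [h1, PMp_succ_left]
    rw [hsplit]
    rw [← Matrix.mulVec_mulVec, ← Matrix.mulVec_mulVec]
    have hinner : (PMp m n a ((1 : ℤ) + ((c : ℕ) : ℤ) + 1) d).mulVec
        (vv m e (1 + (n : ℤ)) ((c : ℕ) : ℤ)) = vv m e (2 + ((c : ℕ) : ℤ)) ((n : ℤ) - 1) := by
      have h := vv_chain m n a e hrec d (2 + ((c : ℕ) : ℤ)) ((c : ℕ) : ℤ)
        (by positivity) (by push_cast; omega)
      rw [show (2 : ℤ) + ((c : ℕ) : ℤ) + ((d : ℕ) : ℤ) = 1 + (n : ℤ) by push_cast; omega,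
        show ((c : ℕ) : ℤ) + ((d : ℕ) : ℤ) = (n : ℤ) - 1 by push_cast; omega] at h
      rw [show (1 : ℤ) + ((c : ℕ) : ℤ) + 1 = 2 + ((c : ℕ) : ℤ) by ring]
      exact h
    rw [hinner, vv_last m w n hn e htop0 htop1, Amat_mulVec_snoc]
    have houter : (PMp m n a 1 (c : ℕ)).mulVec
        (((-1 : K) ^ (m + 1)) • ((Fin.cons (1 : K) fun _ => (0 : K)) : Fin (m + 2) → K))
        = ((-1 : K) ^ (m + 1)) • vv m e 1 ((c : ℕ) : ℤ) := by
      rw [Matrix.mulVec_smul]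
      congr 1
      have h := vv_chain m n a e hrec (c : ℕ) 1 0 le_rfl (by push_cast; omega)
      rw [vv_zero m e hlow hzero, zero_add] at h
      exact h
    exact houter
  -- Step C : conclude
  have hU : (Matrix.of fun r c : Fin (m + 2) => vv m e 1 ((c : ℕ) : ℤ) r).det = 1 :=
    det_diamond_zero m e hlow hzero 1
  set U : Matrix (Fin (m + 2)) (Fin (m + 2)) K :=
    Matrix.of fun r c : Fin (m + 2) => vv m e 1 ((c : ℕ) : ℤ) r with hUdef
  have hmul : PMp m n a 1 n * U
      = (((-1 : K) ^ (m + 1)) • (1 : Matrix (Fin (m + 2)) (Fin (m + 2)) K)) * U := by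
    funext r c
    have h1 : (PMp m n a 1 n * U) r c = ((PMp m n a 1 n).mulVec (vv m e 1 ((c : ℕ) : ℤ))) r := by
      rw [Matrix.mul_apply, Matrix.mulVec, dotProduct]
      rfl
    rw [h1, stepA c]
    rw [Matrix.smul_mul, Matrix.one_mul]
    simp [hUdef]
  have hUunit : IsUnit U.det := by rw [hU]; exact isUnit_one
  have := congrArg (fun X => X * U⁻¹) hmul
  simp only [Matrix.mul_assoc, Matrix.mul_nonsing_inv U hUunit, Matrix.mul_one] at this
  rw [friezeProd_eq_PMp]
  exact this

end Aux5
/-- Bottom-up construction of the frieze entries from the coefficients. -/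
def ebuild (K : Type) [Field K] (m n : ℕ) (a : Fin (m + 1) → ZMod n → K) : ℕ → ℤ → K
  | 0, _ => 1
  | (j + 1), i =>
      (∑ t : Fin (m + 1),
        (-1 : K) ^ (t : ℕ) * a ⟨m - (t : ℕ), by omega⟩ ((i + (t : ℕ) : ℤ) : ZMod n) *
          (if h : (t : ℕ) ≤ j then ebuild K m n a (j - (t : ℕ)) (i + (t : ℕ) + 1) else 0))
      + (-1 : K) ^ (m + 1) *
          (if h : m + 2 ≤ j + 1 then ebuild K m n a (j + 1 - (m + 2)) (i + ((m + 2 : ℕ) : ℤ))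
           else 0)
  termination_by j _ => j
  decreasing_by all_goals omega

/-- The candidate frieze. -/
def eback (K : Type) [Field K] (m n : ℕ) (a : Fin (m + 1) → ZMod n → K) (j i : ℤ) : K :=
  if 0 ≤ j ∧ j ≤ (n : ℤ) - 1 then ebuild K m n a j.toNat i else 0

section Aux6
variable {K : Type} [Field K]

lemma eback_low (m n : ℕ) (a : Fin (m + 1) → ZMod n → K) (j i : ℤ) (hj : j ≤ -1) :
    eback K m n a j i = 0 := by
  rw [eback, if_neg]
  intro h
  omega

lemma eback_zero (m n : ℕ) (a : Fin (m + 1) → ZMod n → K) (hn : 1 ≤ n) (i : ℤ) :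
    eback K m n a 0 i = 1 := by
  rw [eback, if_pos ⟨le_refl 0, by omega⟩]
  have h0 : (0 : ℤ).toNat = 0 := rfl
  rw [h0]
  simp [ebuild]

lemma eback_rec (m n : ℕ) (a : Fin (m + 1) → ZMod n → K) :
    SatisfiesRecursion K (m + 2) n (eback K m n a) a := by
  intro i j h1 h2
  show eback K m n a j i =
      (∑ t : Fin (m + 1),
        (-1 : K) ^ (t : ℕ) * a ⟨m - (t : ℕ), by omega⟩ ((i + (t : ℕ) : ℤ) : ZMod n)
          * eback K m n a (j - (t : ℕ) - 1) (i + (t : ℕ) + 1))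
      + (-1 : K) ^ (m + 1) * eback K m n a (j - ((m + 2 : ℕ) : ℤ)) (i + ((m + 2 : ℕ) : ℤ))
  obtain ⟨jj, hjj⟩ : ∃ jj, j.toNat = jj + 1 := ⟨j.toNat - 1, by omega⟩
  have hL : eback K m n a j i = ebuild K m n a (jj + 1) i := by
    rw [eback, if_pos ⟨by omega, h2⟩, hjj]
  rw [hL, ebuild]
  congr 1
  · refine Finset.sum_congr rfl fun t _ => ?_
    congr 1
    have ht : (t : ℕ) ≤ m := by have := t.isLt; omega
    by_cases hht : (t : ℕ) ≤ jj
    · rw [dif_pos hht, eback, if_pos ⟨by omega, by omega⟩]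
      congr 1
      omega
    · rw [dif_neg hht, eback, if_neg]
      intro hcon
      exact hht (by omega)
  · congr 1
    by_cases hht : m + 2 ≤ jj + 1
    · rw [dif_pos hht, eback, if_pos ⟨by push_cast; omega, by push_cast; omega⟩]
      congr 1
      push_cast
      omega
    · rw [dif_neg hht, eback, if_neg]
      intro hcon
      push_cast at hcon
      exact hht (by omega)

lemma Amat_det (m n : ℕ) (a : Fin (m + 1) → ZMod n → K) (i : ℤ) :
    (Amat m n a i).det = 1 := companion_det m n a _

lemma mat_mul_left_cancel {N : ℕ} (A X Y : Matrix (Fin N) (Fin N) K)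
    (h : IsUnit A.det) (hAXY : A * X = A * Y) : X = Y := by
  have h2 := congrArg (fun Z => A⁻¹ * Z) hAXY
  simpa [← Matrix.mul_assoc, Matrix.nonsing_inv_mul A h] using h2

lemma mat_mul_right_cancel {N : ℕ} (A X Y : Matrix (Fin N) (Fin N) K)
    (h : IsUnit A.det) (hAXY : X * A = Y * A) : X = Y := by
  have h2 := congrArg (fun Z => Z * A⁻¹) hAXY
  simpa [Matrix.mul_assoc, Matrix.mul_nonsing_inv A h] using h2

lemma PMp_one (m n : ℕ) (a : Fin (m + 1) → ZMod n → K) (i : ℤ) :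
    PMp m n a i 1 = Amat m n a i := by
  rw [PMp, show List.range 1 = [0] from rfl, List.map_singleton, List.prod_singleton]
  norm_num

lemma Amat_shift (m n : ℕ) (a : Fin (m + 1) → ZMod n → K) (i : ℤ) :
    Amat m n a (i + (n : ℤ)) = Amat m n a i := by
  rw [Amat, Amat]
  congr 1
  push_cast
  rw [ZMod.natCast_self]
  ring

lemma PMp_cyc (m n : ℕ) (a : Fin (m + 1) → ZMod n → K) (i : ℤ) :
    PMp m n a i n * Amat m n a i = Amat m n a i * PMp m n a (i + 1) n := by
  have h1 : PMp m n a i (n + 1) = PMp m n a i n * Amat m n a (i + (n : ℤ)) := by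
    rw [PMp_add, PMp_one]
  have h2 : PMp m n a i (n + 1) = Amat m n a i * PMp m n a (i + 1) n :=
    PMp_succ_left m n a i n
  rw [Amat_shift] at h1
  rw [← h1, h2]

lemma PMp_all (m n : ℕ) (a : Fin (m + 1) → ZMod n → K)
    (hprod : PMp m n a 1 n = ((-1 : K) ^ (m + 1)) • (1 : Matrix (Fin (m + 2)) (Fin (m + 2)) K)) :
    ∀ i : ℤ, PMp m n a i n = ((-1 : K) ^ (m + 1)) • (1 : Matrix (Fin (m + 2)) (Fin (m + 2)) K) := by
  have key : ∀ i : ℤ, (PMp m n a i n = ((-1 : K) ^ (m + 1)) • 1)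
      ↔ (PMp m n a (i + 1) n = ((-1 : K) ^ (m + 1)) • 1) := by
    intro i
    have hc := PMp_cyc m n a i
    constructor
    · intro h
      apply mat_mul_left_cancel (Amat m n a i) _ _ (by rw [Amat_det]; exact isUnit_one)
      rw [← hc, h, Matrix.smul_mul, Matrix.mul_smul, Matrix.one_mul, Matrix.mul_one]
    · intro h
      apply mat_mul_right_cancel (Amat m n a i) _ _ (by rw [Amat_det]; exact isUnit_one)
      rw [hc, h, Matrix.smul_mul, Matrix.mul_smul, Matrix.one_mul, Matrix.mul_one]
  have main : ∀ i : ℤ, PMp m n a (1 + i) n = ((-1 : K) ^ (m + 1)) • 1 := by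
    intro i
    induction i using Int.induction_on with
    | zero => exact hprod
    | succ i ih =>
      have := (key (1 + (i : ℤ))).1 ih
      rwa [show (1 : ℤ) + (i : ℤ) + 1 = 1 + ((i : ℤ) + 1) by ring] at this
    | pred i ih =>
      apply (key (1 + (-(i : ℤ) - 1))).2
      rwa [show (1 : ℤ) + (-(i : ℤ) - 1) + 1 = 1 + -(i : ℤ) by ring]
  intro i
  have := main (i - 1)
  rwa [show (1 : ℤ) + (i - 1) = i by ring] at this

end Aux6
section Aux7
variable {K : Type} [Field K]

lemma pow_neg_one_sq (m : ℕ) : ((-1 : K) ^ (m + 1)) * ((-1 : K) ^ (m + 1)) = 1 := by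
  rw [← pow_add, show m + 1 + (m + 1) = 2 * (m + 1) by ring, pow_mul]
  norm_num

lemma back_vv_last (m w n : ℕ) (hn : n = w + m + 3) (a : Fin (m + 1) → ZMod n → K)
    (e : ℤ → ℤ → K)
    (hlow : ∀ j i : ℤ, j ≤ -1 → e j i = 0)
    (hzero : ∀ i : ℤ, e 0 i = 1)
    (hrec : SatisfiesRecursion K (m + 2) n e a)
    (hPM : ∀ i : ℤ, PMp m n a i n = ((-1 : K) ^ (m + 1)) • (1 : Matrix (Fin (m + 2)) (Fin (m + 2)) K))
    (i : ℤ) :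
    vv m e i ((n : ℤ) - 1) = ((Fin.snoc (fun _ => (0 : K)) (1 : K)) : Fin (m + 2) → K) := by
  have h1 : (PMp m n a i (n - 1)).mulVec (vv m e (i + ((n - 1 : ℕ) : ℤ)) 0)
      = vv m e i (0 + ((n - 1 : ℕ) : ℤ)) :=
    vv_chain m n a e hrec (n - 1) i 0 le_rfl (by push_cast; omega)
  rw [vv_zero m e hlow hzero] at h1
  have h2 : PMp m n a i n = PMp m n a i (n - 1) * Amat m n a (i + ((n - 1 : ℕ) : ℤ)) := by
    have h0 : PMp m n a i n = PMp m n a i ((n - 1) + 1) := congrArg _ (by omega)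
    rw [h0, PMp_add, PMp_one]
  have h3 : (PMp m n a i n).mulVec
      (((-1 : K) ^ (m + 1)) • ((Fin.snoc (fun _ => (0 : K)) (1 : K)) : Fin (m + 2) → K))
      = vv m e i (0 + ((n - 1 : ℕ) : ℤ)) := by
    rw [h2, ← Matrix.mulVec_mulVec, Amat_mulVec_scaled_snoc, h1]
  rw [hPM i, Matrix.smul_mulVec, Matrix.one_mulVec, smul_smul, pow_neg_one_sq,
    one_smul] at h3
  rw [show (n : ℤ) - 1 = 0 + ((n - 1 : ℕ) : ℤ) by push_cast; omega, ← h3]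

lemma back_top1 (m w n : ℕ) (hn : n = w + m + 3) (e : ℤ → ℤ → K)
    (hsnoc : ∀ i : ℤ, vv m e i ((n : ℤ) - 1)
      = ((Fin.snoc (fun _ => (0 : K)) (1 : K)) : Fin (m + 2) → K)) (i : ℤ) :
    e ((w : ℤ) + 1) i = 1 := by
  have h := congrFun (hsnoc (i - ((m + 1 : ℕ) : ℤ))) (Fin.last (m + 1))
  rw [Fin.snoc_last] at h
  have hv : ((Fin.last (m + 1) : Fin (m + 2)) : ℕ) = m + 1 := rfl
  calc e ((w : ℤ) + 1) i
      = e ((n : ℤ) - 1 - (((Fin.last (m + 1) : Fin (m + 2)) : ℕ) : ℤ))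
          ((i - ((m + 1 : ℕ) : ℤ)) + (((Fin.last (m + 1) : Fin (m + 2)) : ℕ) : ℤ)) := by
        apply e_congr e
        · rw [hv]; push_cast; omega
        · rw [hv]; push_cast; ring
    _ = 1 := h

lemma back_top0 (m w n : ℕ) (hn : n = w + m + 3) (e : ℤ → ℤ → K)
    (hhigh : ∀ j i : ℤ, (n : ℤ) ≤ j → e j i = 0)
    (hsnoc : ∀ i : ℤ, vv m e i ((n : ℤ) - 1)
      = ((Fin.snoc (fun _ => (0 : K)) (1 : K)) : Fin (m + 2) → K))
    (j i : ℤ) (hj : (w : ℤ) + 2 ≤ j) :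
    e j i = 0 := by
  by_cases hjn : (n : ℤ) ≤ j
  · exact hhigh j i hjn
  have hjr : (w : ℤ) + 2 ≤ j ∧ j ≤ (n : ℤ) - 1 := ⟨hj, by omega⟩
  set t : Fin (m + 1) := ⟨((n : ℤ) - 1 - j).toNat, by omega⟩ with ht
  have h := congrFun (hsnoc (i - ((t : ℕ) : ℤ))) t.castSucc
  rw [Fin.snoc_castSucc] at h
  have hv : ((t.castSucc : Fin (m + 2)) : ℕ) = ((n : ℤ) - 1 - j).toNat := rfl
  calc e j i
      = e ((n : ℤ) - 1 - (((t.castSucc : Fin (m + 2)) : ℕ) : ℤ))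
          ((i - ((t : ℕ) : ℤ)) + (((t.castSucc : Fin (m + 2)) : ℕ) : ℤ)) := by
        apply e_congr e
        · rw [hv]; omega
        · rw [hv, ht]; simp only [Fin.val_mk]; omega
    _ = 0 := h

lemma det_diamond_all (m w n : ℕ) (hn : n = w + m + 3) (a : Fin (m + 1) → ZMod n → K)
    (e : ℤ → ℤ → K)
    (hlow : ∀ j i : ℤ, j ≤ -1 → e j i = 0)
    (hzero : ∀ i : ℤ, e 0 i = 1)
    (hrec : SatisfiesRecursion K (m + 2) n e a) :
    ∀ jj : ℕ, jj ≤ w + 1 → ∀ i : ℤ,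
      (Matrix.of fun r c : Fin (m + 2) =>
        e ((jj : ℤ) + ((c : ℕ) : ℤ) - ((r : ℕ) : ℤ)) (i + ((r : ℕ) : ℤ))).det = 1 := by
  intro jj
  induction jj with
  | zero =>
    intro _ i
    have h := det_diamond_zero m e hlow hzero i
    rw [← h]
    congr 1
    funext r c
    simp only [Matrix.of_apply, vv]
    exact e_congr e (by push_cast; ring) rfl
  | succ jj ih =>
    intro hjj i
    have hM : (Matrix.of fun r c : Fin (m + 2) =>
          e (((jj + 1 : ℕ) : ℤ) + ((c : ℕ) : ℤ) - ((r : ℕ) : ℤ)) (i + ((r : ℕ) : ℤ)))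
        = Amat m n a i * (Matrix.of fun r c : Fin (m + 2) =>
          e ((jj : ℤ) + ((c : ℕ) : ℤ) - ((r : ℕ) : ℤ)) ((i + 1) + ((r : ℕ) : ℤ))) := by
      apply Matrix.ext
      intro r c
      have hcol : (fun s : Fin (m + 2) =>
          (Matrix.of fun r c : Fin (m + 2) =>
            e ((jj : ℤ) + ((c : ℕ) : ℤ) - ((r : ℕ) : ℤ)) ((i + 1) + ((r : ℕ) : ℤ))) s c)
          = vv m e (i + 1) ((jj : ℤ) + ((c : ℕ) : ℤ)) := by
        funext s
        simp only [Matrix.of_apply, vv]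
      have hmul : (Amat m n a i * (Matrix.of fun r c : Fin (m + 2) =>
            e ((jj : ℤ) + ((c : ℕ) : ℤ) - ((r : ℕ) : ℤ)) ((i + 1) + ((r : ℕ) : ℤ)))) r c
          = ((Amat m n a i).mulVec (vv m e (i + 1) ((jj : ℤ) + ((c : ℕ) : ℤ)))) r := by
        rw [← hcol, Matrix.mul_apply, Matrix.mulVec, dotProduct]
      rw [hmul, ← vv_step m n a e hrec i ((jj : ℤ) + ((c : ℕ) : ℤ))
        (by positivity) (by have := c.isLt; push_cast; omega)]
      simp only [Matrix.of_apply, vv]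
      exact e_congr e (by push_cast; ring) rfl
    rw [hM, Matrix.det_mul, Amat_det, one_mul]
    exact ih (by omega) (i + 1)

lemma det_diamond1_all (m w n : ℕ) (hn : n = w + m + 3) (a : Fin (m + 1) → ZMod n → K)
    (e : ℤ → ℤ → K)
    (hrec : SatisfiesRecursion K (m + 2) n e a)
    (i j : ℤ) (h1 : 1 ≤ j) (h2 : j ≤ (w : ℤ)) :
    (Matrix.of fun r c : Fin (m + 3) =>
      e (j + ((c : ℕ) : ℤ) - ((r : ℕ) : ℤ)) (i + ((r : ℕ) : ℤ))).det = 0 := by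
  set M : Matrix (Fin (m + 3)) (Fin (m + 3)) K :=
    Matrix.of fun r c : Fin (m + 3) =>
      e (j + ((c : ℕ) : ℤ) - ((r : ℕ) : ℤ)) (i + ((r : ℕ) : ℤ)) with hMdef
  set lam : Fin (m + 3) → K :=
    Fin.cons (1 : K)
      ((Fin.snoc (fun t : Fin (m + 1) =>
          -((-1 : K) ^ (t : ℕ) * a ⟨m - (t : ℕ), by omega⟩ ((i + (t : ℕ) : ℤ) : ZMod n)))
        (-(-1 : K) ^ (m + 1))) : Fin (m + 2) → K) with hlam
  have hvm : Matrix.vecMul lam M = 0 := by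
    funext c
    have hbound1 : 1 ≤ j + ((c : ℕ) : ℤ) := by
      have := Int.natCast_nonneg (c : ℕ); omega
    have hbound2 : j + ((c : ℕ) : ℤ) ≤ (n : ℤ) - 1 := by have := c.isLt; push_cast; omega
    have S : e (j + ((c : ℕ) : ℤ)) i =
        (∑ t : Fin (m + 1),
          (-1 : K) ^ (t : ℕ) * a ⟨m - (t : ℕ), by omega⟩ ((i + (t : ℕ) : ℤ) : ZMod n)
            * e (j + ((c : ℕ) : ℤ) - (t : ℕ) - 1) (i + (t : ℕ) + 1))
        + (-1 : K) ^ (m + 1)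
            * e (j + ((c : ℕ) : ℤ) - ((m + 2 : ℕ) : ℤ)) (i + ((m + 2 : ℕ) : ℤ)) :=
      hrec i (j + ((c : ℕ) : ℤ)) hbound1 hbound2
    show ∑ r : Fin (m + 3), lam r * M r c = 0
    rw [Fin.sum_univ_succ, Fin.sum_univ_castSucc]
    have hA : lam 0 * M 0 c = e (j + ((c : ℕ) : ℤ)) i := by
      rw [hlam, Fin.cons_zero, one_mul, hMdef]
      simp only [Matrix.of_apply]
      exact e_congr e (by simp) (by simp)
    have hB : ∀ u : Fin (m + 1), lam (u.castSucc).succ * M (u.castSucc).succ c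
        = -((-1 : K) ^ (u : ℕ) * a ⟨m - (u : ℕ), by omega⟩ ((i + (u : ℕ) : ℤ) : ZMod n)
            * e (j + ((c : ℕ) : ℤ) - (u : ℕ) - 1) (i + (u : ℕ) + 1)) := by
      intro u
      rw [hlam, Fin.cons_succ, Fin.snoc_castSucc, hMdef]
      simp only [Matrix.of_apply]
      have hval : (((u.castSucc).succ : Fin (m + 3)) : ℕ) = (u : ℕ) + 1 := rfl
      rw [hval]
      have he : e (j + ((c : ℕ) : ℤ) - (((u : ℕ) + 1 : ℕ) : ℤ)) (i + (((u : ℕ) + 1 : ℕ) : ℤ))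
          = e (j + ((c : ℕ) : ℤ) - (u : ℕ) - 1) (i + (u : ℕ) + 1) :=
        e_congr e (by push_cast; ring) (by push_cast; ring)
      rw [he]
      ring
    have hC : lam (Fin.last (m + 1)).succ * M (Fin.last (m + 1)).succ c
        = -((-1 : K) ^ (m + 1)
            * e (j + ((c : ℕ) : ℤ) - ((m + 2 : ℕ) : ℤ)) (i + ((m + 2 : ℕ) : ℤ))) := by
      rw [hlam, Fin.cons_succ, Fin.snoc_last, hMdef]
      simp only [Matrix.of_apply]
      have hval : (((Fin.last (m + 1)).succ : Fin (m + 3)) : ℕ) = m + 2 := rfl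
      rw [hval]
      ring
    rw [hA, hC, show (∑ u : Fin (m + 1), lam (u.castSucc).succ * M (u.castSucc).succ c)
        = ∑ u : Fin (m + 1),
            -((-1 : K) ^ (u : ℕ) * a ⟨m - (u : ℕ), by omega⟩ ((i + (u : ℕ) : ℤ) : ZMod n)
              * e (j + ((c : ℕ) : ℤ) - (u : ℕ) - 1) (i + (u : ℕ) + 1))
      from Finset.sum_congr rfl fun u _ => hB u]
    rw [Finset.sum_neg_distrib, S]
    ring
  by_contra hdet
  have hUnit : IsUnit M.det := isUnit_iff_ne_zero.2 hdet
  have h1 := congrArg (fun v => Matrix.vecMul v M⁻¹) hvm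
  simp only [Matrix.vecMul_vecMul, Matrix.mul_nonsing_inv M hUnit, Matrix.vecMul_one,
    Matrix.zero_vecMul] at h1
  have h0 := congrFun h1 0
  rw [hlam, Fin.cons_zero] at h0
  simp at h0

end Aux7

section Aux8
variable {K : Type} [Field K]

lemma backward (m w n : ℕ) (hn : n = w + m + 3) (a : Fin (m + 1) → ZMod n → K)
    (hprod : friezeProd K (m + 2) n a
      = ((-1 : K) ^ (m + 1)) • (1 : Matrix (Fin (m + 2)) (Fin (m + 2)) K)) :
    IsTameFrieze K (m + 2) w (eback K m n a)
      ∧ SatisfiesRecursion K (m + 2) n (eback K m n a) a := by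
  have hrec := eback_rec m n a
  have hlow : ∀ j i : ℤ, j ≤ -1 → eback K m n a j i = 0 :=
    fun j i hj => eback_low m n a j i hj
  have hzero : ∀ i, eback K m n a 0 i = 1 := fun i => eback_zero m n a (by omega) i
  have hhigh : ∀ j i : ℤ, (n : ℤ) ≤ j → eback K m n a j i = 0 := by
    intro j i hj
    rw [eback, if_neg]
    intro h
    omega
  have hPM := PMp_all m n a (by rw [← friezeProd_eq_PMp]; exact hprod)
  have hsnoc := fun i => back_vv_last m w n hn a _ hlow hzero hrec hPM i
  have htop1 := fun i => back_top1 m w n hn _ hsnoc i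
  have htop0 := fun j i hj => back_top0 m w n hn _ hhigh hsnoc j i hj
  refine ⟨⟨hlow, fun j i hj => htop0 j i hj, hzero, htop1, ?_, ?_⟩, hrec⟩
  · intro i j hb1 hb2
    have hb1' : 0 ≤ j := by push_cast at hb1; omega
    have hb2' : j ≤ (w : ℤ) + 1 := by push_cast at hb2; omega
    have h := det_diamond_all m w n hn a _ hlow hzero hrec j.toNat (by omega) i
    rw [show ((j.toNat : ℕ) : ℤ) = j from by omega] at h
    exact h
  · intro i j hb1 hb2
    apply det_diamond1_all m w n hn a _ hrec i j
    · push_cast at hb1; omega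
    · push_cast at hb2; omega

end Aux8


/-- there exists a tame `SL_k`-frieze pattern of width `w` whose entries
satisfy the recursion with coefficients `(a_{s,i})` if and only if
`A_1 A_2 ⋯ A_n = (-1)^{k-1} I_k`. -/
theorem exists_frieze_iff_friezeProd
    (K : Type) [Field K] (k w : ℕ) (hk : 2 ≤ k) (hw : 1 ≤ w)
    (n : ℕ) (hn : n = w + k + 1) (a : Fin (k - 1) → ZMod n → K) :
    (∃ e : ℤ → ℤ → K, IsTameFrieze K k w e ∧ SatisfiesRecursion K k n e a) ↔
      friezeProd K k n a
        = ((-1 : K) ^ (k - 1)) • (1 : Matrix (Fin k) (Fin k) K) := by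
  obtain ⟨m, rfl⟩ : ∃ m, k = m + 2 := ⟨k - 2, by omega⟩
  have hn' : n = w + m + 3 := by omega
  constructor
  · rintro ⟨e, hf, hrec⟩
    exact forward m w n hn' a e hf hrec
  · intro hprod
    obtain ⟨hf, hrec⟩ := backward (w := w) m n hn' a (by exact hprod)
    exact ⟨eback K m n a, hf, hrec⟩

end FriezeCount
end
end

section
/- Let K be a field, k ≥ 2, n ≥ k, and suppose gcd(k, n) = 1. Then every (v_1, ..., v_n) ∈ C_k(n) admits a lift (V_1, ..., V_n) ∈ (K^k)^n with constant consecutive determinants. -/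
open scoped Classical

noncomputable section

namespace FriezeCount

variable (K : Type) [Field K]

/-- Auxiliary recursive sequence used to construct the rescaling factors. -/
def ell (K : Type) [Field K] (k n : ℕ) (t : ZMod n → K) : ℕ → K
  | 0 => 1
  | m + 1 => ell K k n t m * t (((m * k + 1 : ℕ) : ZMod n)) * (t (((m * k : ℕ) : ZMod n)))⁻¹

/-- if `gcd(k, n) = 1`, every tuple in `C_k(n)` admits a lift with
constant consecutive determinants. -/
theorem exists_lift_constConsecDets_of_coprime
    (K : Type) [Field K] (k n : ℕ) (hk : 2 ≤ k) (hkn : k ≤ n)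
    (hgcd : Nat.gcd k n = 1)
    (v : ZMod n → Projectivization K (Fin k → K)) (hv : v ∈ Ccal K k n) :
    ∃ V : ZMod n → Fin k → K, IsLift K k n v V ∧ HasConstConsecDets K k n V := by
  haveI : NeZero n := ⟨by omega⟩
  classical
  -- the base lift
  set W : ZMod n → Fin k → K := fun j => (v j).rep with hWdef
  have hWne : ∀ j, W j ≠ 0 := fun j => Projectivization.rep_nonzero _
  have hWmk : ∀ j, Projectivization.mk K (W j) (hWne j) = v j := fun j =>
    Projectivization.mk_rep (v j)
  -- cyclic determinants of the base lift are nonzero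
  have hcyc : ∀ j : ZMod n,
      (Matrix.of fun (r c : Fin k) => W (j + ((r : ℕ) : ZMod n)) c).det ≠ 0 := by
    intro j
    have h1 : Projectivization.Independent fun t : Fin k => v (j + ((t : ℕ) : ZMod n)) := hv j
    rw [Projectivization.independent_iff] at h1
    have h2 : LinearIndependent K fun r : Fin k =>
        (Matrix.of fun (r c : Fin k) => W (j + ((r : ℕ) : ZMod n)) c) r := h1
    replace h2 := Matrix.linearIndependent_rows_iff_isUnit.mp h2
    exact isUnit_iff_ne_zero.mp ((Matrix.isUnit_iff_isUnit_det _).mp h2)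
  -- signed extension as a scalar multiple
  have hsg : ∀ (Z : ZMod n → Fin k → K) (m : ℕ), signedExt K k n Z m
      = (if m ≤ n then (1 : K) else (-1 : K) ^ (k - 1)) • Z ((m : ZMod n)) := by
    intro Z m
    unfold signedExt
    split <;> simp
  have hsgn_ne : ∀ m : ℕ, (if m ≤ n then (1 : K) else (-1 : K) ^ (k - 1)) ≠ 0 := by
    intro m
    split
    · exact one_ne_zero
    · exact pow_ne_zero _ (neg_ne_zero.mpr one_ne_zero)
  -- the determinants of the signed extension of W
  set D : ℕ → K := fun i =>
    (Matrix.of fun (r c : Fin k) => signedExt K k n W (i + (r : ℕ)) c).det with hDdef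
  have hD : ∀ i : ℕ, D i
      = (∏ r : Fin k, (if i + (r : ℕ) ≤ n then (1 : K) else (-1 : K) ^ (k - 1))) *
        (Matrix.of fun (r c : Fin k) => W ((i : ZMod n) + ((r : ℕ) : ZMod n)) c).det := by
    intro i
    have hM : (Matrix.of fun (r c : Fin k) => signedExt K k n W (i + (r : ℕ)) c)
        = Matrix.of (fun (r c : Fin k) =>
            (if i + (r : ℕ) ≤ n then (1 : K) else (-1 : K) ^ (k - 1)) *
            (Matrix.of fun (r c : Fin k) => W ((i : ZMod n) + ((r : ℕ) : ZMod n)) c) r c) := by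
      ext r c
      simp only [Matrix.of_apply, hsg, Pi.smul_apply, smul_eq_mul]
      have : ((i + (r : ℕ) : ℕ) : ZMod n) = (i : ZMod n) + ((r : ℕ) : ZMod n) := by
        push_cast; ring
      rw [this]
    show (Matrix.of fun (r c : Fin k) => signedExt K k n W (i + (r : ℕ)) c).det = _
    rw [hM]
    exact Matrix.det_mul_column _ _
  have hDne : ∀ i, D i ≠ 0 := by
    intro i
    rw [hD]
    exact mul_ne_zero (Finset.prod_ne_zero_iff.mpr fun r _ => hsgn_ne _) (hcyc _)
  -- the representative index of a residue class in [1, n]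
  set idx : ZMod n → ℕ := fun j => if j.val = 0 then n else j.val with hidxdef
  have hidx : ∀ i : ℕ, 1 ≤ i → i ≤ n → idx ((i : ZMod n)) = i := by
    intro i h1 h2
    rcases eq_or_lt_of_le h2 with rfl | h2
    · simp [hidxdef, ZMod.val_natCast, Nat.mod_self]
    · have hval : (↑i : ZMod n).val = i := by rw [ZMod.val_natCast, Nat.mod_eq_of_lt h2]
      simp only [hidxdef, hval]
      rw [if_neg (by omega)]
  obtain ⟨t, htdef⟩ : ∃ t : ZMod n → K, ∀ j, t j = (D (idx j))⁻¹ := ⟨_, fun _ => rfl⟩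
  have htne : ∀ j, t j ≠ 0 := fun j => by rw [htdef]; exact inv_ne_zero (hDne _)
  -- the unit k in ZMod n
  set g : (ZMod n)ˣ := ZMod.unitOfCoprime k hgcd with hgdef
  have hgk : (g : ZMod n) = (k : ZMod n) := ZMod.coe_unitOfCoprime k hgcd
  -- basic facts about ell
  have hellne : ∀ m : ℕ, ell K k n t m ≠ 0 := by
    intro m
    induction m with
    | zero => simp [ell]
    | succ m ih =>
      simp only [ell]
      exact mul_ne_zero (mul_ne_zero ih (htne _)) (inv_ne_zero (htne _))
  have hellprod : ∀ M : ℕ, ell K k n t M * (∏ m ∈ Finset.range M, t (((m * k : ℕ) : ZMod n)))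
      = ∏ m ∈ Finset.range M, t (((m * k + 1 : ℕ) : ZMod n)) := by
    intro M
    induction M with
    | zero => simp [ell]
    | succ M ih =>
      simp only [ell, Finset.prod_range_succ]
      rw [← ih]
      have h1 : (t (((M * k : ℕ) : ZMod n)))⁻¹ * t (((M * k : ℕ) : ZMod n)) = 1 :=
        inv_mul_cancel₀ (htne _)
      calc ell K k n t M * t (((M * k + 1 : ℕ) : ZMod n)) * (t (((M * k : ℕ) : ZMod n)))⁻¹ *
            ((∏ m ∈ Finset.range M, t (((m * k : ℕ) : ZMod n))) * t (((M * k : ℕ) : ZMod n)))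
          = ell K k n t M * (∏ m ∈ Finset.range M, t (((m * k : ℕ) : ZMod n))) *
              t (((M * k + 1 : ℕ) : ZMod n)) *
              ((t (((M * k : ℕ) : ZMod n)))⁻¹ * t (((M * k : ℕ) : ZMod n))) := by ring
        _ = ell K k n t M * (∏ m ∈ Finset.range M, t (((m * k : ℕ) : ZMod n))) *
              t (((M * k + 1 : ℕ) : ZMod n)) := by rw [h1, mul_one]
  -- bijection lemma for products over ZMod n
  have hbij : ∀ (b : ZMod n) (f : ZMod n → K),
      ∏ m ∈ Finset.range n, f (((m * k : ℕ) : ZMod n) + b) = ∏ j : ZMod n, f j := by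
    intro b f
    refine Finset.prod_bij (fun m _ => ((m * k : ℕ) : ZMod n) + b) (fun m _ => Finset.mem_univ _)
      ?_ ?_ (fun m _ => rfl)
    · intro m1 hm1 m2 hm2 h
      simp only [Finset.mem_range] at hm1 hm2
      have h' : ((m1 * k : ℕ) : ZMod n) = ((m2 * k : ℕ) : ZMod n) := add_right_cancel h
      have h'' : ((m1 : ZMod n)) * (g : ZMod n) = ((m2 : ZMod n)) * (g : ZMod n) := by
        push_cast at h'
        rw [hgk]; exact h'
      have h3 : (m1 : ZMod n) = (m2 : ZMod n) := by
        have := congrArg (· * ((g⁻¹ : (ZMod n)ˣ) : ZMod n)) h''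
        simpa [mul_assoc, ← Units.val_mul] using this
      have := congrArg ZMod.val h3
      rwa [ZMod.val_natCast, ZMod.val_natCast, Nat.mod_eq_of_lt hm1, Nat.mod_eq_of_lt hm2] at this
    · intro j _
      refine ⟨((j - b) * ((g⁻¹ : (ZMod n)ˣ) : ZMod n)).val, Finset.mem_range.mpr (ZMod.val_lt _),
        ?_⟩
      have hcast : ((((j - b) * ((g⁻¹ : (ZMod n)ˣ) : ZMod n)).val : ℕ) : ZMod n)
          = (j - b) * ((g⁻¹ : (ZMod n)ˣ) : ZMod n) := ZMod.natCast_rightInverse _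
      show ((((j - b) * ((g⁻¹ : (ZMod n)ˣ) : ZMod n)).val * k : ℕ) : ZMod n) + b = j
      rw [Nat.cast_mul, hcast, ← hgk, mul_assoc]
      simp [← Units.val_mul]
  have hprod0 : ∏ m ∈ Finset.range n, t (((m * k : ℕ) : ZMod n)) = ∏ j : ZMod n, t j := by
    have := hbij 0 t
    simpa using this
  have hprod1 : ∏ m ∈ Finset.range n, t (((m * k + 1 : ℕ) : ZMod n)) = ∏ j : ZMod n, t j := by
    rw [← hbij 1 t]
    refine Finset.prod_congr rfl fun m _ => ?_
    congr 1
    push_cast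
    ring
  have helln : ell K k n t n = 1 := by
    have h := hellprod n
    rw [hprod0, hprod1] at h
    have hP : (∏ j : ZMod n, t j) ≠ 0 := Finset.prod_ne_zero_iff.mpr fun j _ => htne j
    exact mul_right_cancel₀ hP (h.trans (one_mul _).symm)
  -- the rescaling factors
  obtain ⟨lam, hlamdef⟩ : ∃ lam : ZMod n → K,
      ∀ j, lam j = ell K k n t ((j * ((g⁻¹ : (ZMod n)ˣ) : ZMod n)).val) := ⟨_, fun _ => rfl⟩
  have hlamne : ∀ j, lam j ≠ 0 := fun j => by rw [hlamdef]; exact hellne _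
  have hL1 : ∀ j : ZMod n, lam (j + (k : ZMod n)) = lam j * t (j + 1) * (t j)⁻¹ := by
    intro j
    set m : ℕ := (j * ((g⁻¹ : (ZMod n)ˣ) : ZMod n)).val with hmdef
    have hm : m < n := ZMod.val_lt _
    have hmj : ((m : ℕ) : ZMod n) = j * ((g⁻¹ : (ZMod n)ˣ) : ZMod n) :=
      ZMod.natCast_rightInverse _
    have hjm : ((m : ℕ) : ZMod n) * (k : ZMod n) = j := by
      rw [hmj, ← hgk, mul_assoc]
      simp [← Units.val_mul]
    have hidx2 : (j + (k : ZMod n)) * ((g⁻¹ : (ZMod n)ˣ) : ZMod n) = ((m + 1 : ℕ) : ZMod n) := by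
      rw [add_mul, ← hmj, ← hgk]
      push_cast
      simp [← Units.val_mul]
    have he1 : ((m * k + 1 : ℕ) : ZMod n) = j + 1 := by push_cast; rw [hjm]
    have he2 : ((m * k : ℕ) : ZMod n) = j := by push_cast; rw [hjm]
    have hstep : ell K k n t (m + 1) = ell K k n t m * t (j + 1) * (t j)⁻¹ := by
      simp only [ell, he1, he2]
    have hval : ((j + (k : ZMod n)) * ((g⁻¹ : (ZMod n)ˣ) : ZMod n)).val = (m + 1) % n := by
      rw [hidx2, ZMod.val_natCast]
    have hmod : ell K k n t ((m + 1) % n) = ell K k n t (m + 1) := by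
      by_cases h : m + 1 < n
      · rw [Nat.mod_eq_of_lt h]
      · have hn : m + 1 = n := by omega
        rw [hn, Nat.mod_self, helln]
        simp [ell]
    rw [hlamdef, hlamdef, hval, hmod, hstep]
  -- the product of k consecutive lambdas
  obtain ⟨mu, hmudef⟩ : ∃ mu : ZMod n → K,
      ∀ j, mu j = ∏ r ∈ Finset.range k, lam (j + ((r : ℕ) : ZMod n)) := ⟨_, fun _ => rfl⟩
  have hmustep : ∀ j : ZMod n, lam j * mu (j + 1) = mu j * lam (j + (k : ZMod n)) := by
    intro j
    have e1 : ∏ r ∈ Finset.range (k + 1), lam (j + ((r : ℕ) : ZMod n))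
        = mu j * lam (j + (k : ZMod n)) := by
      rw [Finset.prod_range_succ, hmudef]
    have e2 : ∏ r ∈ Finset.range (k + 1), lam (j + ((r : ℕ) : ZMod n))
        = lam j * mu (j + 1) := by
      rw [Finset.prod_range_succ', mul_comm, hmudef]
      congr 1
      · simp
      · refine Finset.prod_congr rfl fun x _ => ?_
        congr 1
        push_cast
        ring
    rw [← e2, e1]
  have hratio : ∀ j : ZMod n, mu (j + 1) * t j = mu j * t (j + 1) := by
    intro j
    have h := hmustep j
    rw [hL1 j] at h
    apply mul_left_cancel₀ (hlamne j)
    calc lam j * (mu (j + 1) * t j) = (lam j * mu (j + 1)) * t j := by ring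
      _ = (mu j * (lam j * t (j + 1) * (t j)⁻¹)) * t j := by rw [h]
      _ = (mu j * lam j * t (j + 1)) * ((t j)⁻¹ * t j) := by ring
      _ = lam j * (mu j * t (j + 1)) := by rw [inv_mul_cancel₀ (htne j)]; ring
  have hconstN : ∀ m : ℕ, mu ((m : ℕ) : ZMod n) * (t ((m : ℕ) : ZMod n))⁻¹
      = mu 0 * (t 0)⁻¹ := by
    intro m
    induction m with
    | zero => simp
    | succ m ih =>
      have h := hratio ((m : ℕ) : ZMod n)
      have hc : ((m + 1 : ℕ) : ZMod n) = ((m : ℕ) : ZMod n) + 1 := by push_cast; ring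
      rw [hc, ← ih, ← div_eq_mul_inv, ← div_eq_mul_inv,
        div_eq_div_iff (htne _) (htne _)]
      linear_combination h
  have hconst : ∀ j : ZMod n, mu j * (t j)⁻¹ = mu 0 * (t 0)⁻¹ := by
    intro j
    have := hconstN j.val
    rwa [ZMod.natCast_rightInverse j] at this
  -- the rescaled lift
  refine ⟨fun j => lam j • W j, ?_, ?_⟩
  · intro j
    have hne : lam j • W j ≠ 0 := smul_ne_zero (hlamne j) (hWne j)
    refine ⟨hne, ?_⟩
    rw [← hWmk j, Projectivization.mk_eq_mk_iff]
    exact ⟨Units.mk0 (lam j) (hlamne j), rfl⟩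
  · intro i hi i' hi'
    simp only [Finset.mem_Icc] at hi hi'
    have key : ∀ i0 : ℕ, 1 ≤ i0 → i0 ≤ n →
        (Matrix.of fun (r c : Fin k) =>
          signedExt K k n (fun j => lam j • W j) (i0 + (r : ℕ)) c).det
        = mu 0 * (t 0)⁻¹ := by
      intro i0 h1 h2
      have hrow : (Matrix.of fun (r c : Fin k) =>
          signedExt K k n (fun j => lam j • W j) (i0 + (r : ℕ)) c)
          = Matrix.of (fun (r c : Fin k) => lam (((i0 + (r : ℕ) : ℕ)) : ZMod n) *
              (Matrix.of fun (r c : Fin k) => signedExt K k n W (i0 + (r : ℕ)) c) r c) := by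
        ext r c
        simp only [Matrix.of_apply, hsg, Pi.smul_apply, smul_eq_mul]
        ring
      rw [hrow, Matrix.det_mul_column]
      have hprodlam : (∏ r : Fin k, lam (((i0 + (r : ℕ) : ℕ)) : ZMod n))
          = mu ((i0 : ℕ) : ZMod n) := by
        rw [hmudef,
          ← Fin.prod_univ_eq_prod_range
            (fun m : ℕ => lam (((i0 : ℕ) : ZMod n) + ((m : ℕ) : ZMod n))) k]
        exact Finset.prod_congr rfl fun r _ => congrArg lam (by push_cast; ring)
      have hDval : (Matrix.of fun (r c : Fin k) => signedExt K k n W (i0 + (r : ℕ)) c).det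
          = (t ((i0 : ℕ) : ZMod n))⁻¹ := by
        rw [htdef, hidx i0 h1 h2, inv_inv]
      rw [hprodlam, hDval, hconst]
    rw [key i hi.1 hi.2, key i' hi'.1 hi'.2]

end FriezeCount
end
end

section
/- Let K be a field, k ≥ 2, n ≥ k, g = gcd(k, n), and let (V_1, ..., V_n) be a lift of (v_1, ..., v_n) ∈ C_k(n) with constant consecutive determinants. Then the set of all lifts of (v_1, ..., v_n) with constant consecutive determinants is exactly { (λ_1 V_1, ..., λ_g V_g, λ_1 V_{g+1}, ..., λ_g V_{2g}, ..., λ_1 V_{n-g+1}, ..., λ_g V_n) : λ_1, ..., λ_g ∈ K^* }, i.e. the lifts obtained by rescaling by an arbitrary g-periodic sequence of nonzero scalars. -/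
open scoped Classical

noncomputable section

namespace FriezeCount

variable (K : Type) [Field K]

/-! ### Auxiliary lemmas for Statement 12 -/

lemma aux_shift_iter {α : Sort*} {n : ℕ} (f : ZMod n → α) (c : ZMod n)
    (h : ∀ x, f (x + c) = f x) : ∀ (m : ℕ) (x), f (x + (m : ZMod n) * c) = f x := by
  intro m
  induction m with
  | zero => simp
  | succ m ih =>
      intro x
      have h1 : ((m + 1 : ℕ) : ZMod n) * c = (m : ZMod n) * c + c := by push_cast; ring
      rw [h1, ← add_assoc, h, ih]

lemma aux_const_of_period_one {α : Sort*} {n : ℕ} [NeZero n] (f : ZMod n → α)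
    (h : ∀ x, f (x + 1) = f x) (x y : ZMod n) : f x = f y := by
  have h2 := aux_shift_iter f 1 (by simpa using h)
  have h3 : x = y + (((x - y).val : ℕ) : ZMod n) * 1 := by
    rw [mul_one, ZMod.natCast_val, ZMod.cast_id]; ring
  rw [h3, h2]

lemma aux_signedExt_unitSmul (k n : ℕ) (V : ZMod n → Fin k → K) (μ : ZMod n → Kˣ) (m : ℕ) :
    signedExt K k n (fun j => (μ j : K) • V j) m
      = (μ ((m : ℕ) : ZMod n) : K) • signedExt K k n V m := by
  unfold signedExt
  split
  · rfl
  · rw [smul_comm]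

/-- The product of the scaling units along a window of length `k`. -/
def Qprod (k n : ℕ) (μ : ZMod n → Kˣ) (x : ZMod n) : K :=
  ∏ r ∈ Finset.range k, (μ (x + ((r : ℕ) : ZMod n)) : K)

lemma Qprod_ne_zero (k n : ℕ) (μ : ZMod n → Kˣ) (x : ZMod n) : Qprod K k n μ x ≠ 0 :=
  Finset.prod_ne_zero_iff.mpr fun _ _ => Units.ne_zero _

lemma Qprod_step (k n : ℕ) (μ : ZMod n → Kˣ) (x : ZMod n) :
    Qprod K k n μ (x + 1) * (μ x : K)
      = Qprod K k n μ x * (μ (x + ((k : ℕ) : ZMod n)) : K) := by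
  unfold Qprod
  calc (∏ r ∈ Finset.range k, (μ ((x + 1) + ((r : ℕ) : ZMod n)) : K)) * (μ x : K)
      = (∏ r ∈ Finset.range k, (μ (x + (((r + 1 : ℕ)) : ZMod n)) : K)) *
          (μ (x + ((0 : ℕ) : ZMod n)) : K) := by
        congr 1
        · exact Finset.prod_congr rfl (fun r _ => by congr 2; push_cast; ring)
        · congr 1; push_cast; ring
    _ = ∏ r ∈ Finset.range (k + 1), (μ (x + ((r : ℕ) : ZMod n)) : K) :=
        (Finset.prod_range_succ' (fun r : ℕ => (μ (x + ((r : ℕ) : ZMod n)) : K)) k).symm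
    _ = _ := Finset.prod_range_succ _ k

lemma aux_det_signedExt_unitSmul (k n : ℕ) (V : ZMod n → Fin k → K) (μ : ZMod n → Kˣ) (i : ℕ) :
    (Matrix.of fun (r : Fin k) (c : Fin k) =>
        signedExt K k n (fun j => (μ j : K) • V j) (i + (r : ℕ)) c).det =
    Qprod K k n μ ((i : ℕ) : ZMod n) *
      (Matrix.of fun (r : Fin k) (c : Fin k) => signedExt K k n V (i + (r : ℕ)) c).det := by
  have h : (Matrix.of fun (r : Fin k) (c : Fin k) =>
      signedExt K k n (fun j => (μ j : K) • V j) (i + (r : ℕ)) c)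
      = Matrix.of (fun (r : Fin k) (c : Fin k) =>
        (μ (((i : ℕ) : ZMod n) + (((r : ℕ) : ℕ) : ZMod n)) : K) *
          (Matrix.of fun (r : Fin k) (c : Fin k) => signedExt K k n V (i + (r : ℕ)) c) r c) := by
    ext r c
    simp only [Matrix.of_apply]
    rw [aux_signedExt_unitSmul]
    have h2 : ((i + (r : ℕ) : ℕ) : ZMod n) = ((i : ℕ) : ZMod n) + (((r : ℕ) : ℕ) : ZMod n) := by
      push_cast; ring
    rw [h2]
    rfl
  rw [h, Matrix.det_mul_column]
  unfold Qprod
  rw [Fin.prod_univ_eq_prod_range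
    (fun r : ℕ => (μ (((i : ℕ) : ZMod n) + ((r : ℕ) : ZMod n)) : K)) k]

lemma aux_linearIndependent_of_lift (k n : ℕ)
    (v : ZMod n → Projectivization K (Fin k → K)) (hv : v ∈ Ccal K k n)
    (V : ZMod n → Fin k → K) (hV : IsLift K k n v V) (x : ZMod n) :
    LinearIndependent K (fun t : Fin k => V (x + ((t : ℕ) : ZMod n))) := by
  have hind := hv x
  rw [Projectivization.independent_iff] at hind
  have ha : ∀ j : ZMod n, ∃ a : Kˣ, (a : K) • V j = (v j).rep := by
    intro j
    obtain ⟨h0, hmk⟩ := hV j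
    obtain ⟨a, ha⟩ := Projectivization.exists_smul_eq_mk_rep K (V j) h0
    exact ⟨a, by rw [← hmk]; exact ha⟩
  choose a ha using ha
  have h2 := hind.units_smul (fun t : Fin k => (a (x + ((t : ℕ) : ZMod n)))⁻¹)
  convert h2 using 1
  funext t
  simp only [Function.comp_apply, Pi.smul_apply']
  rw [← ha (x + ((t : ℕ) : ZMod n)), ← Units.smul_def, inv_smul_smul]
  rfl

lemma aux_det_signedExt_ne_zero (k n : ℕ)
    (v : ZMod n → Projectivization K (Fin k → K)) (hv : v ∈ Ccal K k n)
    (V : ZMod n → Fin k → K) (hV : IsLift K k n v V) (i : ℕ) :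
    (Matrix.of fun (r : Fin k) (c : Fin k) => signedExt K k n V (i + (r : ℕ)) c).det ≠ 0 := by
  have hrow : ∀ m : ℕ, ∃ c : Kˣ, signedExt K k n V m = (c : K) • V ((m : ℕ) : ZMod n) := by
    intro m
    unfold signedExt
    split
    · exact ⟨1, (one_smul _ _).symm⟩
    · exact ⟨(-1 : Kˣ) ^ (k - 1), by norm_num⟩
  choose c hc using hrow
  have hli : LinearIndependent K
      (fun r : Fin k => (Matrix.of fun (r : Fin k) (c : Fin k) =>
        signedExt K k n V (i + (r : ℕ)) c) r) := by
    have hbase := aux_linearIndependent_of_lift K k n v hv V hV ((i : ℕ) : ZMod n)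
    have h2 := hbase.units_smul (fun r : Fin k => c (i + (r : ℕ)))
    convert h2 using 1
    funext r
    simp only [Matrix.of_apply, Pi.smul_apply']
    have h3 : ((i + (r : ℕ) : ℕ) : ZMod n) = ((i : ℕ) : ZMod n) + (((r : ℕ) : ℕ) : ZMod n) := by
      push_cast; ring
    funext j
    rw [show (Matrix.of fun (r : Fin k) (c : Fin k) => signedExt K k n V (i + (r : ℕ)) c) r j
        = signedExt K k n V (i + (r : ℕ)) j from rfl, hc (i + (r : ℕ)), h3]
    simp [Units.smul_def]
  have h4 := Matrix.linearIndependent_rows_iff_isUnit.mp hli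
  rw [Matrix.isUnit_iff_isUnit_det] at h4
  exact h4.ne_zero

/-- if `V` is a lift of `v ∈ C_k(n)` with constant consecutive
determinants, then the lifts of `v` with constant consecutive determinants are exactly
the rescalings of `V` by an arbitrary `gcd(k,n)`-periodic sequence of nonzero
scalars. -/
theorem lifts_constConsecDets_eq_periodic_rescalings
    (K : Type) [Field K] (k n : ℕ) (hk : 2 ≤ k) (hkn : k ≤ n)
    (v : ZMod n → Projectivization K (Fin k → K)) (hv : v ∈ Ccal K k n)
    (V : ZMod n → Fin k → K) (hV : IsLift K k n v V)
    (hVc : HasConstConsecDets K k n V) :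
    {W : ZMod n → Fin k → K | IsLift K k n v W ∧ HasConstConsecDets K k n W} =
      {W : ZMod n → Fin k → K | ∃ lam : ZMod (Nat.gcd k n) → Kˣ,
        ∀ i : ZMod n,
          W i = ((lam (ZMod.castHom (Nat.gcd_dvd_right k n)
            (ZMod (Nat.gcd k n)) i) : K)) • V i} := by
  have hn2 : 2 ≤ n := le_trans hk hkn
  haveI : NeZero n := ⟨by omega⟩
  have hg0 : 0 < Nat.gcd k n := Nat.gcd_pos_of_pos_left n (by omega)
  haveI : NeZero (Nat.gcd k n) := ⟨by omega⟩
  ext W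
  simp only [Set.mem_setOf_eq]
  constructor
  · rintro ⟨hW, hWc⟩
    have hμ : ∀ i : ZMod n, ∃ a : Kˣ, W i = (a : K) • V i := by
      intro i
      obtain ⟨hW0, hWmk⟩ := hW i
      obtain ⟨hV0, hVmk⟩ := hV i
      obtain ⟨a, ha⟩ :=
        (Projectivization.mk_eq_mk_iff K (W i) (V i) hW0 hV0).mp (hWmk.trans hVmk.symm)
      exact ⟨a, by rw [← ha, Units.smul_def]⟩
    choose μ hμ using hμ
    have hWeq : W = fun i => (μ i : K) • V i := funext hμ
    have hdet : ∀ j : ℕ,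
        (Matrix.of fun (r : Fin k) (c : Fin k) => signedExt K k n W (j + (r : ℕ)) c).det
        = Qprod K k n μ ((j : ℕ) : ZMod n) *
          (Matrix.of fun (r : Fin k) (c : Fin k) => signedExt K k n V (j + (r : ℕ)) c).det := by
      intro j
      rw [hWeq]
      exact aux_det_signedExt_unitSmul K k n V μ j
    have hsurj : ∀ x : ZMod n, ∃ j : ℕ, j ∈ Finset.Icc 1 n ∧ ((j : ℕ) : ZMod n) = x := by
      intro x
      by_cases hx : x = 0
      · exact ⟨n, Finset.mem_Icc.mpr ⟨by omega, le_refl n⟩,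
          by rw [hx]; exact ZMod.natCast_self n⟩
      · refine ⟨x.val, Finset.mem_Icc.mpr ⟨?_, (ZMod.val_lt x).le⟩, ?_⟩
        · exact Nat.pos_of_ne_zero fun h => hx ((ZMod.val_eq_zero x).mp h)
        · rw [ZMod.natCast_val, ZMod.cast_id]
    have hQconst : ∀ x y : ZMod n, Qprod K k n μ x = Qprod K k n μ y := by
      intro x y
      obtain ⟨j, hj, hjx⟩ := hsurj x
      obtain ⟨j', hj', hjy⟩ := hsurj y
      have h1 := hWc j hj j' hj'
      have h2 := hVc j hj j' hj'
      have h3 := hdet j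
      have h4 := hdet j'
      rw [hjx] at h3
      rw [hjy] at h4
      have hne := aux_det_signedExt_ne_zero K k n v hv V hV j'
      rw [h3, h4, h2] at h1
      exact mul_right_cancel₀ hne h1
    have hperu : ∀ x : ZMod n, μ (x + ((k : ℕ) : ZMod n)) = μ x := by
      intro x
      have h1 := Qprod_step K k n μ x
      rw [hQconst (x + 1) x] at h1
      exact (Units.ext (mul_left_cancel₀ (Qprod_ne_zero K k n μ x) h1)).symm
    have hb : ((Nat.gcd k n : ℕ) : ZMod n)
        = ((((Nat.gcdA k n : ℤ) : ZMod n).val : ℕ) : ZMod n) * ((k : ℕ) : ZMod n) := by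
      have h := congrArg (fun z : ℤ => (z : ZMod n)) (Nat.gcd_eq_gcd_ab k n)
      push_cast at h
      rw [ZMod.natCast_self, zero_mul, add_zero] at h
      rw [ZMod.natCast_val, ZMod.cast_id, h, mul_comm]
    have hg : ∀ x : ZMod n, μ (x + ((Nat.gcd k n : ℕ) : ZMod n)) = μ x := by
      intro x
      rw [hb]
      exact aux_shift_iter μ ((k : ℕ) : ZMod n) hperu _ x
    have hgiter := aux_shift_iter μ ((Nat.gcd k n : ℕ) : ZMod n) hg
    refine ⟨fun j => μ ((j.val : ℕ) : ZMod n), fun i => ?_⟩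
    rw [hμ i]
    congr 2
    have hcast : (ZMod.castHom (Nat.gcd_dvd_right k n) (ZMod (Nat.gcd k n)) i)
        = ((i.val : ℕ) : ZMod (Nat.gcd k n)) := by
      rw [ZMod.castHom_apply, ← ZMod.natCast_val]
    have h5 : ((i.val % Nat.gcd k n : ℕ) : ZMod n)
        + ((i.val / Nat.gcd k n : ℕ) : ZMod n) * ((Nat.gcd k n : ℕ) : ZMod n) = i := by
      rw [← Nat.cast_mul, ← Nat.cast_add, Nat.mod_add_div', ZMod.natCast_val, ZMod.cast_id]
    rw [hcast]
    show μ i = μ ((((i.val : ZMod (Nat.gcd k n)).val : ℕ)) : ZMod n)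
    rw [ZMod.val_natCast]
    conv_lhs => rw [← h5]
    exact hgiter (i.val / Nat.gcd k n) _
  · rintro ⟨lam, hlam⟩
    set μ : ZMod n → Kˣ :=
      fun i => lam (ZMod.castHom (Nat.gcd_dvd_right k n) (ZMod (Nat.gcd k n)) i) with hμdef
    have hWeq : W = fun i => (μ i : K) • V i := funext hlam
    have hVlift : ∀ i : ZMod n, V i ≠ 0 := fun i => (hV i).choose
    constructor
    · intro i
      have hne : W i ≠ 0 := by
        rw [hlam i]
        exact smul_ne_zero (Units.ne_zero _) (hVlift i)
      refine ⟨hne, ?_⟩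
      obtain ⟨hV0, hVmk⟩ := hV i
      rw [← hVmk]
      exact (Projectivization.mk_eq_mk_iff K (W i) (V i) hne hV0).mpr
        ⟨μ i, by rw [hlam i, Units.smul_def]⟩
    · have hperu : ∀ x : ZMod n, μ (x + ((k : ℕ) : ZMod n)) = μ x := by
        intro x
        have hcast0 : (ZMod.castHom (Nat.gcd_dvd_right k n) (ZMod (Nat.gcd k n)))
            (((k : ℕ) : ZMod n)) = 0 := by
          rw [map_natCast]
          exact (ZMod.natCast_eq_zero_iff k (Nat.gcd k n)).mpr (Nat.gcd_dvd_left k n)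
        show lam _ = lam _
        congr 1
        rw [map_add, hcast0, add_zero]
      have hstep : ∀ x : ZMod n, Qprod K k n μ (x + 1) = Qprod K k n μ x := by
        intro x
        have h1 := Qprod_step K k n μ x
        rw [hperu x] at h1
        exact mul_right_cancel₀ (Units.ne_zero (μ x)) h1
      have hQconst := aux_const_of_period_one (Qprod K k n μ) hstep
      have hdet : ∀ j : ℕ,
          (Matrix.of fun (r : Fin k) (c : Fin k) => signedExt K k n W (j + (r : ℕ)) c).det
          = Qprod K k n μ ((j : ℕ) : ZMod n) *
            (Matrix.of fun (r : Fin k) (c : Fin k) => signedExt K k n V (j + (r : ℕ)) c).det := by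
        intro j
        rw [hWeq]
        exact aux_det_signedExt_unitSmul K k n V μ j
      intro i hi i' hi'
      rw [hdet i, hdet i', hQconst ((i : ℕ) : ZMod n) ((i' : ℕ) : ZMod n), hVc i hi i' hi']


end FriezeCount
end
end

section
/- Let K be a field, k ≥ 2, n ≥ k, g = gcd(k, n). Let v ∈ C_k(n) with lift (V_1, ..., V_n) and let (U_1, ..., U_r) be a decomposition of v. Then for every i ∈ {1, ..., n} there is exactly one j ∈ {1, ..., r} with V_i ∈ U_j; if φ : ℤ → {1, ..., r} denotes the map sending i (taken modulo n) to this j, then φ is g-periodic, i.e. φ(i) = φ(i + g) for all i. In particular, r ≤ g for every decomposition of v. -/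
open scoped Classical

noncomputable section

namespace FriezeCount

variable (K : Type) [Field K]

/-- for a decomposition `(U_1, ..., U_r)` of `v ∈ C_k(n)` with lift `V`,
every `V_i` lies in exactly one `U_j`; the induced map `φ` is `gcd(k,n)`-periodic;
and `r ≤ gcd(k, n)`. -/
theorem decomposition_map_periodic
    (K : Type) [Field K] (k n : ℕ) (hk : 2 ≤ k) (hkn : k ≤ n)
    (v : ZMod n → Projectivization K (Fin k → K)) (hv : v ∈ Ccal K k n)
    (V : ZMod n → Fin k → K) (hV : IsLift K k n v V)
    (r : ℕ) (U : Fin r → Submodule K (Fin k → K))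
    (hU : IsDecompOfLift K k n V U) :
    (∀ i : ZMod n, ∃! j : Fin r, V i ∈ U j) ∧
    (∀ φ : ZMod n → Fin r, (∀ i, V i ∈ U (φ i)) →
      ∀ i : ZMod n, φ (i + (Nat.gcd k n : ZMod n)) = φ i) ∧
    r ≤ Nat.gcd k n := by
  have hv : ∀ i : ZMod n,
      Projectivization.Independent fun t : Fin k => v (i + ((t : ℕ) : ZMod n)) := hv
  have hV : ∀ i, ∃ h : V i ≠ 0, Projectivization.mk K (V i) h = v i := hV
  obtain ⟨hbot, hindep, hsup, hmem⟩ := hU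
  haveI : NeZero n := ⟨by omega⟩
  haveI : NeZero k := ⟨by omega⟩
  -- choose unit scalars relating V to representatives
  have hrep : ∀ j : ZMod n, ∃ a : Kˣ, a • (v j).rep = V j := by
    intro j
    obtain ⟨h0, hmk⟩ := hV j
    rw [← Projectivization.mk_rep (v j)] at hmk
    exact (Projectivization.mk_eq_mk_iff K _ _ h0 (Projectivization.rep_nonzero _)).mp hmk
  choose a ha using hrep
  have hli : ∀ i : ZMod n,
      LinearIndependent K fun t : Fin k => V (i + ((t : ℕ) : ZMod n)) := by
    intro i
    have h := (Projectivization.independent_iff).mp (hv i)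
    have h2 := h.units_smul fun t : Fin k => a (i + ((t : ℕ) : ZMod n))
    convert h2 using 1
    funext t
    simp only [Pi.smul_apply', Function.comp_apply]
    exact (ha _).symm
    rfl
  have hspan : ∀ i : ZMod n,
      Submodule.span K (Set.range fun t : Fin k => V (i + ((t : ℕ) : ZMod n))) = ⊤ := by
    intro i
    haveI : Nonempty (Fin k) := ⟨⟨0, by omega⟩⟩
    exact (hli i).span_eq_top_of_card_eq_finrank (by simp [Module.finrank_fin_fun])
  have hleW : ∀ (j j' : Fin r), j' ≠ j → U j' ≤ ⨆ l, ⨆ _ : l ≠ j, U l := by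
    intro j j' h
    exact le_iSup₂ (f := fun (l : Fin r) (_ : l ≠ j) => U l) j' h
  -- uniqueness
  have huniq : ∀ (i : ZMod n) (j j' : Fin r), V i ∈ U j → V i ∈ U j' → j = j' := by
    intro i j j' hj hj'
    by_contra hne
    have hle : U j' ≤ ⨆ l, ⨆ _ : l ≠ j, U l := hleW j j' (Ne.symm hne)
    have := Submodule.disjoint_def.mp (hindep j) (V i) hj (hle hj')
    exact (hV i).choose this
  choose φ0 hφ0 using hmem
  -- step: φ is k-periodic
  have step : ∀ (φ : ZMod n → Fin r), (∀ i, V i ∈ U (φ i)) →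
      ∀ i : ZMod n, φ (i + ((k : ℕ) : ZMod n)) = φ i := by
    intro φ hφ i
    by_contra hne
    have hmemtop : V (i + ((k : ℕ) : ZMod n)) ∈
        Submodule.span K (Set.range fun t : Fin k => V (i + ((t : ℕ) : ZMod n))) := by
      rw [hspan i]; trivial
    rw [Submodule.mem_span_range_iff_exists_fun] at hmemtop
    obtain ⟨c, hc⟩ := hmemtop
    -- c 0 ≠ 0
    have hc0 : c 0 ≠ 0 := by
      intro h0
      have hC := hli (i + 1)
      have hnot := hC.notMem_span_image
        (s := {s : Fin k | (s : ℕ) < k - 1}) (x := ⟨k - 1, by omega⟩)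
        (by simp)
      apply hnot
      have hkey : i + 1 + (((k - 1 : ℕ) : ℕ) : ZMod n) = i + ((k : ℕ) : ZMod n) := by
        have : ((k - 1 : ℕ) : ZMod n) = ((k : ℕ) : ZMod n) - 1 := by
          have hk1 : (1 : ℕ) ≤ k := by omega
          push_cast [Nat.cast_sub hk1]
          ring
        rw [this]; ring
      simp only [Fin.val_mk]
      rw [hkey, ← hc]
      apply Submodule.sum_mem
      intro t _
      by_cases ht : (t : ℕ) = 0
      · have : c t = 0 := by
          have : t = 0 := Fin.ext (by simpa using ht)
          rw [this]; exact h0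
        simp [this]
      · apply Submodule.smul_mem
        apply Submodule.subset_span
        refine ⟨⟨(t : ℕ) - 1, by omega⟩, by simp; omega, ?_⟩
        simp only []
        congr 1
        have h1t : (1 : ℕ) ≤ (t : ℕ) := by omega
        have : (((t : ℕ) - 1 : ℕ) : ZMod n) = ((t : ℕ) : ZMod n) - 1 := by
          push_cast [Nat.cast_sub h1t]; ring
        rw [this]; ring
    -- the U (φ i)-component of V (i+k)
    set x : Fin k → K := ∑ t : Fin k,
      (if φ (i + ((t : ℕ) : ZMod n)) = φ i then c t else 0) • V (i + ((t : ℕ) : ZMod n))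
      with hx
    have hxU : x ∈ U (φ i) := by
      apply Submodule.sum_mem
      intro t _
      by_cases h : φ (i + ((t : ℕ) : ZMod n)) = φ i
      · rw [if_pos h]
        exact Submodule.smul_mem _ _ (h ▸ hφ (i + ((t : ℕ) : ZMod n)))
      · rw [if_neg h, zero_smul]; exact Submodule.zero_mem _
    have hxW : x ∈ ⨆ l, ⨆ _ : l ≠ φ i, U l := by
      have hy : V (i + ((k : ℕ) : ZMod n)) - x ∈ ⨆ l, ⨆ _ : l ≠ φ i, U l := by
        rw [← hc, hx, ← Finset.sum_sub_distrib]
        apply Submodule.sum_mem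
        intro t _
        by_cases h : φ (i + ((t : ℕ) : ZMod n)) = φ i
        · rw [if_pos h, sub_self]; exact Submodule.zero_mem _
        · rw [if_neg h, zero_smul, sub_zero]
          exact hleW _ _ h (Submodule.smul_mem _ _ (hφ _))
      have hVk : V (i + ((k : ℕ) : ZMod n)) ∈ ⨆ l, ⨆ _ : l ≠ φ i, U l :=
        hleW _ _ hne (hφ _)
      have := Submodule.sub_mem _ hVk hy
      simpa using this
    have hx0 : x = 0 := Submodule.disjoint_def.mp (hindep (φ i)) x hxU hxW
    have h0 := Fintype.linearIndependent_iff.mp (hli i)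
      (fun t => if φ (i + ((t : ℕ) : ZMod n)) = φ i then c t else 0) (by rw [← hx, hx0]) 0
    simp only [Fin.val_zero, Nat.cast_zero, add_zero, if_pos rfl] at h0
    exact hc0 h0
  -- integer-multiple periodicity
  have zstep : ∀ (φ : ZMod n → Fin r), (∀ i, V i ∈ U (φ i)) →
      ∀ (m : ℤ) (i : ZMod n), φ (i + m • ((k : ℕ) : ZMod n)) = φ i := by
    intro φ hφ m
    induction m using Int.induction_on with
    | zero => simp
    | succ m ih =>
      intro i
      have h1 : i + ((m : ℤ) + 1) • ((k : ℕ) : ZMod n)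
          = (i + (m : ℤ) • ((k : ℕ) : ZMod n)) + ((k : ℕ) : ZMod n) := by
        rw [add_zsmul, one_zsmul]; ring
      rw [h1, step φ hφ, ih]
    | pred m ih =>
      intro i
      have h1 : (i + (-(m : ℤ) - 1) • ((k : ℕ) : ZMod n)) + ((k : ℕ) : ZMod n)
          = i + (-(m : ℤ)) • ((k : ℕ) : ZMod n) := by
        rw [sub_zsmul, one_zsmul, neg_zsmul]; ring
      have := step φ hφ (i + (-(m : ℤ) - 1) • ((k : ℕ) : ZMod n))
      rw [h1, ih] at this
      exact this.symm
  -- gcd periodicity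
  have hbez : ((Nat.gcd k n : ℕ) : ZMod n) = (Nat.gcdA k n) • ((k : ℕ) : ZMod n) := by
    have h := Nat.gcd_eq_gcd_ab k n
    have h2 := congrArg (fun z : ℤ => (z : ZMod n)) h
    push_cast at h2
    rw [zsmul_eq_mul]
    rw [h2, ZMod.natCast_self]
    push_cast
    ring
  have gper : ∀ (φ : ZMod n → Fin r), (∀ i, V i ∈ U (φ i)) →
      ∀ i : ZMod n, φ (i + (Nat.gcd k n : ZMod n)) = φ i := by
    intro φ hφ i
    rw [hbez]
    exact zstep φ hφ _ i
  refine ⟨fun i => ⟨φ0 i, hφ0 i, fun j' hj' => huniq i j' (φ0 i) hj' (hφ0 i)⟩, gper, ?_⟩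
  -- r ≤ gcd
  have hg : 0 < Nat.gcd k n := Nat.gcd_pos_of_pos_left n (by omega)
  have hsurjwin : ∀ j : Fin r, ∃ t : Fin k, φ0 (((t : ℕ) : ZMod n)) = j := by
    intro j
    by_contra h
    push_neg at h
    have hW : (⊤ : Submodule K (Fin k → K)) ≤ ⨆ l, ⨆ _ : l ≠ j, U l := by
      rw [← hspan 0]
      rw [Submodule.span_le]
      rintro x ⟨t, rfl⟩
      simp only [zero_add]
      exact hleW _ _ (h t) (hφ0 _)
    have : U j = ⊥ := (hindep j).eq_bot_of_le (le_trans le_top hW)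
    exact hbot j this
  have iter : ∀ (q s : ℕ),
      φ0 (((s + q * Nat.gcd k n : ℕ) : ZMod n)) = φ0 ((s : ℕ) : ZMod n) := by
    intro q
    induction q with
    | zero => simp
    | succ q ih =>
      intro s
      have hcast : ((s + (q + 1) * Nat.gcd k n : ℕ) : ZMod n)
          = ((s + q * Nat.gcd k n : ℕ) : ZMod n) + ((Nat.gcd k n : ℕ) : ZMod n) := by
        push_cast; ring
      rw [hcast, gper φ0 hφ0, ih]
  have hsurj : Function.Surjective
      (fun s : Fin (Nat.gcd k n) => φ0 (((s : ℕ) : ZMod n))) := by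
    intro j
    obtain ⟨t, ht⟩ := hsurjwin j
    refine ⟨⟨(t : ℕ) % Nat.gcd k n, Nat.mod_lt _ hg⟩, ?_⟩
    have h2 := iter ((t : ℕ) / Nat.gcd k n) ((t : ℕ) % Nat.gcd k n)
    rw [Nat.mod_add_div'] at h2
    rw [← ht]
    exact h2.symm
  have := Fintype.card_le_of_surjective _ hsurj
  simpa using this


end FriezeCount
end
end

section
/- Let K be a field, k ≥ 2, n ≥ k, and let v ∈ C_k(n). Let (U_1, ..., U_r) be a maximal decomposition of v and let (W_1, ..., W_s) be any decomposition of v. Then for every j ∈ {1, ..., r} there is an l ∈ {1, ..., s} with U_j ⊆ W_l. In particular, any two maximal decompositions of v consist of the same subspaces, i.e. the maximal decomposition is unique up to ordering. -/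
open scoped Classical

noncomputable section

namespace FriezeCount

variable (K : Type) [Field K]

section AuxStatement14

variable {K}

/-- If `D` is an independent family of submodules whose supremum is everything, the
vectors `V i` span everything, and each `V i` lies in some `D j`, then each `D j` is
spanned by the vectors it contains. -/
lemma decomp_span_eq {M : Type*} [AddCommGroup M] [Module K M]
    {ι κ : Type*} (V : ι → M)
    (hspan : Submodule.span K (Set.range V) = ⊤)
    {D : κ → Submodule K M} (hind : iSupIndep D) (hsup : (⨆ j, D j) = ⊤)
    (hmem : ∀ i, ∃ j, V i ∈ D j) (j : κ) :
    Submodule.span K (Set.range V ∩ (D j : Set M)) = D j := by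
  set S : κ → Submodule K M := fun l => Submodule.span K (Set.range V ∩ (D l : Set M))
    with hSdef
  have hSle : ∀ l, S l ≤ D l := fun l => Submodule.span_le.mpr Set.inter_subset_right
  have hSsup : (⨆ l, S l) = ⊤ := by
    refine le_antisymm le_top ?_
    rw [← hspan]
    refine Submodule.span_le.mpr ?_
    rintro x ⟨i, rfl⟩
    obtain ⟨l, hl⟩ := hmem i
    exact le_iSup S l (Submodule.subset_span ⟨⟨i, rfl⟩, hl⟩)
  refine le_antisymm (hSle j) ?_
  intro x hx
  have hx' : x ∈ S j ⊔ ⨆ (l) (_ : l ≠ j), S l := by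
    rw [← iSup_split_single S j, hSsup]; trivial
  obtain ⟨a, ha, b, hb, hab⟩ := Submodule.mem_sup.mp hx'
  have hbD : b ∈ D j := by
    have haD : a ∈ D j := hSle j ha
    have : x - a ∈ D j := Submodule.sub_mem _ hx haD
    rwa [← hab, add_sub_cancel_left] at this
  have hbY : b ∈ ⨆ (l) (_ : l ≠ j), D l :=
    (iSup₂_mono fun l _ => hSle l) hb
  have hb0 : b = 0 := Submodule.disjoint_def.mp (hind j) b hbD hbY
  rw [← hab, hb0, add_zero]
  exact ha

/-- Two lifts of the same projective tuple agree up to (nonzero) scalars, hence have the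
same submodule memberships. -/
lemma lift_mem_iff {k n : ℕ} {v : ZMod n → Projectivization K (Fin k → K)}
    {V V' : ZMod n → Fin k → K} (hV : IsLift K k n v V) (hV' : IsLift K k n v V')
    (M : Submodule K (Fin k → K)) (i : ZMod n) : V' i ∈ M ↔ V i ∈ M := by
  obtain ⟨h, e⟩ := hV i
  obtain ⟨h', e'⟩ := hV' i
  have : Projectivization.mk K (V' i) h' = Projectivization.mk K (V i) h := by
    rw [e, e']
  obtain ⟨a, ha⟩ := (Projectivization.mk_eq_mk_iff K _ _ h' h).mp this
  rw [← ha]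
  exact M.smul_mem_iff a.isUnit.ne_zero

/-- Main auxiliary result: each member of a maximal decomposition of `v ∈ C_k(n)` lies
inside some member of any decomposition of `v`. -/
lemma max_decomp_le (k n : ℕ) (hk : 2 ≤ k)
    (v : ZMod n → Projectivization K (Fin k → K)) (hv : v ∈ Ccal K k n)
    {r s : ℕ} {U : Fin r → Submodule K (Fin k → K)}
    {W : Fin s → Submodule K (Fin k → K)}
    (hU : IsMaxDecompOf K k n v U) (hW : IsDecompOf K k n v W) :
    ∀ j : Fin r, ∃ l : Fin s, U j ≤ W l := by
  classical
  intro j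
  -- a canonical lift
  set V : ZMod n → Fin k → K := fun i => (v i).rep with hVdef
  have hlift : IsLift K k n v V := fun i => ⟨(v i).rep_nonzero, (v i).mk_rep⟩
  -- the vectors span everything
  have hspan : Submodule.span K (Set.range V) = ⊤ := by
    have h0 := hv 0
    rw [Projectivization.independent_iff] at h0
    have hcard : Fintype.card (Fin k) = Module.finrank K (Fin k → K) := by
      simp [Module.finrank_fintype_fun_eq_card]
    have : Nonempty (Fin k) := ⟨⟨0, by omega⟩⟩
    have htop := h0.span_eq_top_of_card_eq_finrank hcard
    refine le_antisymm le_top ?_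
    rw [← htop]
    refine Submodule.span_le.mpr ?_
    rintro x ⟨t, rfl⟩
    exact Submodule.subset_span ⟨0 + ((t : ℕ) : ZMod n), rfl⟩
  obtain ⟨hUne, hUind, hUsup, hUmem⟩ := hU.1 V hlift
  obtain ⟨hWne, hWind, hWsup, hWmem⟩ := hW V hlift
  have hUspan := decomp_span_eq V hspan hUind hUsup hUmem
  -- the pieces of `U j` cut out by the `W l`
  set T : Fin s → Submodule K (Fin k → K) :=
    fun l => Submodule.span K ((Set.range V ∩ (U j : Set _)) ∩ (W l : Set _)) with hTdef
  have hTleU : ∀ l, T l ≤ U j :=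
    fun l => Submodule.span_le.mpr (Set.inter_subset_left.trans Set.inter_subset_right)
  have hTleW : ∀ l, T l ≤ W l := fun l => Submodule.span_le.mpr Set.inter_subset_right
  have hTsup : (⨆ l, T l) = U j := by
    refine le_antisymm (iSup_le hTleU) ?_
    rw [← hUspan j]
    refine Submodule.span_le.mpr ?_
    rintro x ⟨⟨i, rfl⟩, hxU⟩
    obtain ⟨l, hl⟩ := hWmem i
    exact le_iSup T l (Submodule.subset_span ⟨⟨⟨i, rfl⟩, hxU⟩, hl⟩)
  by_contra hcon
  push_neg at hcon
  -- at least one nonzero piece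
  have h1 : ∃ l1, T l1 ≠ ⊥ := by
    by_contra h
    push_neg at h
    exact hUne j (by rw [← hTsup]; simp [h])
  obtain ⟨l1, hl1⟩ := h1
  -- a second nonzero piece
  have h2 : ∃ l2, l2 ≠ l1 ∧ T l2 ≠ ⊥ := by
    by_contra h
    push_neg at h
    have : (⨆ l, T l) = T l1 := by
      rw [iSup_split_single T l1]
      have : (⨆ (l) (_ : l ≠ l1), T l) = ⊥ := by
        refine le_antisymm ?_ bot_le
        exact iSup₂_le fun l hl => (h l hl).le
      rw [this, sup_bot_eq]
    exact hcon l1 (by rw [← hTsup, this]; exact hTleW l1)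
  obtain ⟨l2, hl2ne, hl2⟩ := h2
  -- split `U j`
  set W₁ : Submodule K (Fin k → K) := T l1 with hW₁def
  set W₂ : Submodule K (Fin k → K) := ⨆ (l) (_ : l ≠ l1), T l with hW₂def
  have hW₂ne : W₂ ≠ ⊥ := by
    intro h
    exact hl2 (le_bot_iff.mp (h ▸ le_iSup₂ (f := fun l (_ : l ≠ l1) => T l) l2 hl2ne))
  have hdisj : Disjoint W₁ W₂ := by
    refine Disjoint.mono (hTleW l1) ?_ (hWind l1)
    exact iSup₂_mono fun l _ => hTleW l
  have hsup12 : W₁ ⊔ W₂ = U j := by rw [hW₁def, hW₂def, ← iSup_split_single T l1, hTsup]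
  refine hU.2 j W₁ W₂ hl1 hW₂ne hdisj hsup12 ?_
  intro V' hlift' i
  obtain ⟨j', hj'⟩ := hUmem i
  by_cases hjj : j' = j
  · subst hjj
    obtain ⟨l', hl'⟩ := hWmem i
    have hT : V i ∈ T l' := Submodule.subset_span ⟨⟨⟨i, rfl⟩, hj'⟩, hl'⟩
    by_cases hll : l' = l1
    · subst hll
      exact Or.inr (Or.inl ((lift_mem_iff hlift hlift' W₁ i).mpr hT))
    · refine Or.inr (Or.inr ((lift_mem_iff hlift hlift' W₂ i).mpr ?_))
      exact le_iSup₂ (f := fun l (_ : l ≠ l1) => T l) l' hll hT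
  · exact Or.inl ⟨j', hjj, (lift_mem_iff hlift hlift' (U j') i).mpr hj'⟩

end AuxStatement14

/-- each member of a maximal decomposition of `v ∈ C_k(n)` is contained
in some member of any decomposition of `v`; in particular the maximal decomposition
is unique up to ordering. -/
theorem maximal_decomposition_le_and_unique
    (K : Type) [Field K] (k n : ℕ) (hk : 2 ≤ k) (hkn : k ≤ n)
    (v : ZMod n → Projectivization K (Fin k → K)) (hv : v ∈ Ccal K k n)
    (r s : ℕ) (U : Fin r → Submodule K (Fin k → K))
    (W : Fin s → Submodule K (Fin k → K))
    (hU : IsMaxDecompOf K k n v U) (hW : IsDecompOf K k n v W) :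
    (∀ j : Fin r, ∃ l : Fin s, U j ≤ W l) ∧
    (∀ (r' : ℕ) (U' : Fin r' → Submodule K (Fin k → K)),
      IsMaxDecompOf K k n v U' → Set.range U = Set.range U') := by
  classical
  -- a canonical lift, for extracting independence and nontriviality of the pieces
  set V : ZMod n → Fin k → K := fun i => (v i).rep with hVdef
  have hlift : IsLift K k n v V := fun i => ⟨(v i).rep_nonzero, (v i).mk_rep⟩
  -- the containment statement, applied twice for uniqueness
  have main : ∀ j : Fin r, ∃ l : Fin s, U j ≤ W l := max_decomp_le k n hk v hv hU hW
  refine ⟨main, ?_⟩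
  intro r' U' hU'
  -- a self-strengthening: mutual containment between two maximal decompositions
  have key : ∀ {r₁ r₂ : ℕ} (U₁ : Fin r₁ → Submodule K (Fin k → K))
      (U₂ : Fin r₂ → Submodule K (Fin k → K)),
      IsMaxDecompOf K k n v U₁ → IsMaxDecompOf K k n v U₂ →
      Set.range U₁ ⊆ Set.range U₂ := by
    intro r₁ r₂ U₁ U₂ h₁ h₂
    rintro x ⟨j, rfl⟩
    obtain ⟨l, hl⟩ := max_decomp_le k n hk v hv h₁ h₂.1 j
    obtain ⟨m, hm⟩ := max_decomp_le k n hk v hv h₂ h₁.1 l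
    obtain ⟨h₁ne, h₁ind, -, -⟩ := h₁.1 V hlift
    have hjm : j = m := by
      by_contra hne
      have : U₁ j ≤ ⨆ (m') (_ : m' ≠ j), U₁ m' :=
        hl.trans (hm.trans (le_iSup₂ (f := fun m' (_ : m' ≠ j) => U₁ m') m (Ne.symm hne)))
      exact h₁ne j ((h₁ind j).eq_bot_of_le this)
    exact ⟨l, le_antisymm (by rw [hjm]; exact hm) hl⟩
  exact le_antisymm (key U U' hU hU') (key U' U hU' hU)

end FriezeCount
end
end
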